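/- arXiv:2311.03201 — 7 statements merged into one kernel-verified Lean document; each statement's English description precedes it below -/
import Mathlib

section
/- Let H be a real inner product space and y₁,…,yₙ ∈ H with Gram matrix V = (⟨yᵢ,yⱼ⟩) having eigenvalues λ₁ ≥ … ≥ λₙ ≥ 0 and orthonormal eigenvectors u₁,…,uₙ ∈ ℝⁿ. Then for every subspace W ⊆ H with dim W ≤ k (1 ≤ k < n), Σ_{i=1}^n ‖yᵢ − Π_W yᵢ‖² ≥ Σ_{i=k+1}^n λᵢ; moreover, for W = span{z₁,…,z_k}, where zᵢ = Σⱼ (uᵢ)ⱼ yⱼ are the principal components, equality holds: Σ_{i=1}^n ‖yᵢ − Π_W yᵢ‖² = Σ_{i=k+1}^n λᵢ. -/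
open scoped InnerProductSpace

private lemma sum_sq_comb {n : ℕ} (u : Fin n → Fin n → ℝ)
    (hu : ∀ i j, (∑ a, u i a * u j a) = if i = j then 1 else 0)
    (c : Fin n → ℝ) : ∑ j, (∑ i, u i j * c i) ^ 2 = ∑ i, c i ^ 2 := by
  have h1 : ∀ j : Fin n, (∑ i, u i j * c i) ^ 2
      = ∑ i, ∑ i', (c i * c i') * (u i j * u i' j) := by
    intro j
    rw [sq, Finset.sum_mul_sum]
    apply Finset.sum_congr rfl; intro i _
    apply Finset.sum_congr rfl; intro i' _
    ring
  simp_rw [h1]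
  rw [Finset.sum_comm]
  have h2 : ∀ i : Fin n, ∑ j, ∑ i', (c i * c i') * (u i j * u i' j)
      = ∑ i', (c i * c i') * (∑ j, u i j * u i' j) := by
    intro i
    rw [Finset.sum_comm]
    simp [Finset.mul_sum]
  simp_rw [h2, hu]
  simp [sq]

private lemma rearrange_aux {n k : ℕ} (hkn : k < n) (lam β : Fin n → ℝ)
    (hanti : Antitone lam) (hnn : ∀ i, 0 ≤ lam i)
    (hβ0 : ∀ i, 0 ≤ β i) (hβ1 : ∀ i, β i ≤ 1)
    (hβs : ∑ i, β i ≤ (k : ℝ)) :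
    ∑ i, lam i * β i ≤ ∑ i ∈ Finset.univ.filter (fun i : Fin n => (i:ℕ) < k), lam i := by
  classical
  set κ : Fin n := ⟨k, hkn⟩ with hκ
  set A := Finset.univ.filter (fun i : Fin n => (i:ℕ) < k) with hA
  set B := Finset.univ.filter (fun i : Fin n => ¬ (i:ℕ) < k) with hB
  have hcardA : (A.card : ℝ) = k := by
    have : A = Finset.Iio κ := by
      ext i; simp [hA, Fin.lt_def, hκ]
    rw [this, Fin.card_Iio]
  have hsplit : ∀ f : Fin n → ℝ, ∑ i, f i = ∑ i ∈ A, f i + ∑ i ∈ B, f i := by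
    intro f; rw [hA, hB, Finset.sum_filter_add_sum_filter_not]
  have h1 : ∑ i ∈ B, lam i * β i ≤ lam κ * ∑ i ∈ B, β i := by
    rw [Finset.mul_sum]
    apply Finset.sum_le_sum
    intro i hi
    have hki : k ≤ (i : ℕ) := by
      have := (Finset.mem_filter.mp hi).2
      omega
    exact mul_le_mul_of_nonneg_right (hanti (by simpa [Fin.le_def, hκ] using hki)) (hβ0 i)
  have h2 : lam κ * ∑ i ∈ A, (1 - β i) ≤ ∑ i ∈ A, lam i * (1 - β i) := by
    rw [Finset.mul_sum]
    apply Finset.sum_le_sum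
    intro i hi
    have hik : (i : ℕ) < k := (Finset.mem_filter.mp hi).2
    exact mul_le_mul_of_nonneg_right (hanti (by simp [Fin.le_def, hκ, le_of_lt hik]))
      (by linarith [hβ1 i])
  have h3 : ∑ i ∈ A, (1 - β i) = (k : ℝ) - ∑ i ∈ A, β i := by
    rw [Finset.sum_sub_distrib]
    simp [hcardA]
  have h4 : ∑ i ∈ B, β i ≤ (k : ℝ) - ∑ i ∈ A, β i := by
    have := hsplit β
    linarith
  have h5 : lam κ * ∑ i ∈ B, β i ≤ lam κ * ((k:ℝ) - ∑ i ∈ A, β i) :=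
    mul_le_mul_of_nonneg_left h4 (hnn κ)
  have h6 : ∑ i ∈ A, lam i * (1 - β i) = ∑ i ∈ A, lam i - ∑ i ∈ A, lam i * β i := by
    rw [← Finset.sum_sub_distrib]; apply Finset.sum_congr rfl; intro i _; ring
  have h7 := hsplit (fun i => lam i * β i)
  rw [← h3] at h5
  linarith

/-- Paper's Theorem 4 (Optimality C): for `y₁,…,yₙ` in a real inner product space with Gram
matrix `V` having eigenvalues `λ₁ ≥ … ≥ λₙ ≥ 0` and orthonormal eigenvectors `u₁,…,uₙ`,
every subspace `W` of dimension at most `k` satisfies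
`∑ i ‖yᵢ − Π_W yᵢ‖² ≥ ∑_{i>k} λᵢ`, with equality for the span of the first `k`
principal components `zᵢ = ∑ⱼ (uᵢ)ⱼ yⱼ`. -/
theorem optimality_C
    {H : Type*} [NormedAddCommGroup H] [InnerProductSpace ℝ H]
    {n k : ℕ} (hk : 1 ≤ k) (hkn : k < n)
    (y : Fin n → H)
    (V : Matrix (Fin n) (Fin n) ℝ)
    (hV : ∀ i j, V i j = ⟪y i, y j⟫_ℝ)
    (lam : Fin n → ℝ)
    (hlam_anti : Antitone lam)
    (hlam_nonneg : ∀ i, 0 ≤ lam i)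
    (u : Fin n → Fin n → ℝ)
    (hu_orth : ∀ i j, (∑ a, u i a * u j a) = if i = j then 1 else 0)
    (hu_eig : ∀ i, V.mulVec (u i) = lam i • u i)
    (z : Fin n → H)
    (hz : ∀ i, z i = ∑ j, u i j • y j)
    (W₀ : Submodule ℝ H)
    (hW₀ : W₀ = Submodule.span ℝ {v | ∃ i : Fin n, (i : ℕ) < k ∧ v = z i})
    [FiniteDimensional ℝ W₀] :
    (∀ (W : Submodule ℝ H) [FiniteDimensional ℝ W], Module.finrank ℝ W ≤ k →
      ∑ i ∈ Finset.univ.filter (fun i : Fin n => k ≤ (i : ℕ)), lam i ≤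
        ∑ i, ‖y i - (W.orthogonalProjectionOnto (y i) : H)‖ ^ 2) ∧
    ∑ i, ‖y i - (W₀.orthogonalProjectionOnto (y i) : H)‖ ^ 2 =
      ∑ i ∈ Finset.univ.filter (fun i : Fin n => k ≤ (i : ℕ)), lam i := by
  classical
  have hcol : ∀ a b : Fin n, (∑ i, u i a * u i b) = if a = b then 1 else 0 := by
    have h1 : (Matrix.of u) * (Matrix.of u).transpose = 1 := by
      ext i j
      simpa [Matrix.mul_apply, Matrix.one_apply] using hu_orth i j
    have h2 : (Matrix.of u).transpose * (Matrix.of u) = 1 := mul_eq_one_comm.mp h1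
    intro a b
    have h3 := congrFun (congrFun h2 a) b
    simpa [Matrix.mul_apply, Matrix.one_apply] using h3
  have hzz : ∀ i j, ⟪z i, z j⟫_ℝ = if i = j then lam i else 0 := by
    intro i j
    have hmv : ∀ a, (∑ b, u j b * ⟪y a, y b⟫_ℝ) = lam j * u j a := by
      intro a
      have h4 := congrFun (hu_eig j) a
      simpa [Matrix.mulVec, dotProduct, hV, mul_comm] using h4
    rw [hz i, hz j, sum_inner]
    simp_rw [real_inner_smul_left, inner_sum, real_inner_smul_right, hmv]
    have h5 : ∀ a, u i a * (lam j * u j a) = lam j * (u i a * u j a) := by intro a; ring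
    simp_rw [h5, ← Finset.mul_sum, hu_orth]
    by_cases h : i = j <;> simp [h]
  have hyz : ∀ jj, y jj = ∑ i, u i jj • z i := by
    intro jj
    simp_rw [hz, Finset.smul_sum, smul_smul]
    rw [Finset.sum_comm]
    simp_rw [← Finset.sum_smul, hcol]
    simp
  have hcomb : ∀ c d : Fin n → ℝ,
      ⟪∑ i, c i • z i, ∑ i, d i • z i⟫_ℝ = ∑ i, c i * d i * lam i := by
    intro c d
    rw [sum_inner]
    simp_rw [real_inner_smul_left, inner_sum, real_inner_smul_right, hzz, mul_ite, mul_zero,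
      Finset.sum_ite_eq, Finset.mem_univ, if_true]
    apply Finset.sum_congr rfl; intro i _; ring
  have hnorm_comb : ∀ c : Fin n → ℝ, ‖∑ i, c i • z i‖ ^ 2 = ∑ i, c i ^ 2 * lam i := by
    intro c
    rw [← real_inner_self_eq_norm_sq, hcomb]
    apply Finset.sum_congr rfl; intro i _; ring
  have hz_norm : ∀ i, ‖z i‖ ^ 2 = lam i := by
    intro i
    rw [← real_inner_self_eq_norm_sq, hzz]
    simp
  have hsum_y : ∑ j, ‖y j‖ ^ 2 = ∑ i, lam i := by
    have h6 : ∀ jj, ‖y jj‖ ^ 2 = ∑ i, u i jj ^ 2 * lam i := by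
      intro jj
      rw [hyz jj, hnorm_comb]
    simp_rw [h6]
    rw [Finset.sum_comm]
    have h7 : ∀ i, ∑ jj, u i jj ^ 2 * lam i = lam i := by
      intro i
      rw [← Finset.sum_mul]
      simp_rw [sq]
      rw [hu_orth i i]
      simp
    simp_rw [h7]
  set A := Finset.univ.filter (fun i : Fin n => (i:ℕ) < k) with hAdef
  set B := Finset.univ.filter (fun i : Fin n => k ≤ (i:ℕ)) with hBdef
  -- Pythagoras
  have hpyth : ∀ (W : Submodule ℝ H) [FiniteDimensional ℝ W], ∀ x : H,
      ‖x - (W.orthogonalProjectionOnto x : H)‖ ^ 2 = ‖x‖ ^ 2 - ‖(W.orthogonalProjectionOnto x : H)‖ ^ 2 := by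
    intro W _ x
    have h0 : ⟪(W.orthogonalProjectionOnto x : H), x - (W.orthogonalProjectionOnto x : H)⟫_ℝ = 0 := by
      rw [real_inner_comm]
      exact Submodule.starProjection_inner_eq_zero (K := W) x _ (W.orthogonalProjectionOnto x).2
    have h8 := norm_add_sq_real ((W.orthogonalProjectionOnto x : H)) (x - (W.orthogonalProjectionOnto x : H))
    rw [add_sub_cancel, h0] at h8
    linarith
  constructor
  · -- the inequality
    intro W _ hWk
    set m := Module.finrank ℝ W with hm
    set b := stdOrthonormalBasis ℝ W with hb
    set e : Fin m → H := fun t => (b t : H) with he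
    have honb : Orthonormal ℝ e := b.orthonormal.comp_linearIsometry W.subtypeₗᵢ
    have hPnorm : ∀ x : H, ‖(W.orthogonalProjectionOnto x : H)‖ ^ 2 = ∑ t, ⟪e t, x⟫_ℝ ^ 2 := by
      intro x
      have h9 : ((W.orthogonalProjectionOnto x : W) : H) = ∑ t, ⟪e t, x⟫_ℝ • e t := by
        rw [b.orthogonalProjectionOnto_apply_eq_sum x]
        push_cast
        simp [he]
        rfl
      rw [h9, ← real_inner_self_eq_norm_sq, honb.inner_sum]
      apply Finset.sum_congr rfl; intro t _
      simp [sq]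
    have hinner_y : ∀ (t : Fin m) (jj : Fin n),
        ⟪e t, y jj⟫_ℝ = ∑ i, u i jj * ⟪e t, z i⟫_ℝ := by
      intro t jj
      rw [hyz jj, inner_sum]
      simp_rw [real_inner_smul_right]
    set S : Fin n → ℝ := fun i => ∑ t, ⟪e t, z i⟫_ℝ ^ 2 with hSdef
    have hsum_proj : ∑ jj, ‖(W.orthogonalProjectionOnto (y jj) : H)‖ ^ 2 = ∑ i, S i := by
      simp_rw [hPnorm]
      rw [Finset.sum_comm]
      have h10 : ∀ t, ∑ jj, ⟪e t, y jj⟫_ℝ ^ 2 = ∑ i, ⟪e t, z i⟫_ℝ ^ 2 := by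
        intro t
        simp_rw [hinner_y t]
        exact sum_sq_comb u hu_orth _
      simp_rw [h10]
      rw [Finset.sum_comm]
    have hS_nonneg : ∀ i, 0 ≤ S i := by
      intro i; exact Finset.sum_nonneg fun t _ => sq_nonneg _
    have hS_le : ∀ i, S i ≤ lam i := by
      intro i
      have h11 := honb.sum_inner_products_le (z i) (s := Finset.univ)
      rw [hz_norm i] at h11
      simpa [Real.norm_eq_abs, sq_abs] using h11
    set β : Fin n → ℝ := fun i => if lam i = 0 then 0 else S i / lam i with hβdef
    have hlam_pos : ∀ i, lam i ≠ 0 → 0 < lam i := fun i h => lt_of_le_of_ne (hlam_nonneg i) (Ne.symm h)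
    have hz_zero : ∀ i, lam i = 0 → z i = 0 := by
      intro i h
      have := hz_norm i
      rw [h] at this
      have : ‖z i‖ = 0 := by nlinarith [norm_nonneg (z i)]
      simpa using this
    have hS_zero : ∀ i, lam i = 0 → S i = 0 := by
      intro i h
      simp [hSdef, hz_zero i h]
    have hSβ : ∀ i, S i = lam i * β i := by
      intro i
      by_cases h : lam i = 0
      · simp [hβdef, h, hS_zero i h]
      · simp only [hβdef, if_neg h]
        field_simp
    have hβ0 : ∀ i, 0 ≤ β i := by
      intro i
      by_cases h : lam i = 0
      · simp [hβdef, h]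
      · simp only [hβdef, if_neg h]
        exact div_nonneg (hS_nonneg i) (hlam_nonneg i)
    have hβ1 : ∀ i, β i ≤ 1 := by
      intro i
      by_cases h : lam i = 0
      · simp [hβdef, h]
      · simp only [hβdef, if_neg h]
        rw [div_le_one (hlam_pos i h)]
        exact hS_le i
    -- Bessel bound on ∑ β
    have hβsum : ∑ i, β i ≤ (k : ℝ) := by
      set v : {i : Fin n // lam i ≠ 0} → H := fun i => (Real.sqrt (lam i.1))⁻¹ • z i.1 with hv
      have hvon : Orthonormal ℝ v := by
        rw [orthonormal_iff_ite]
        intro i j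
        have hpos : 0 < lam i.1 := hlam_pos i.1 i.2
        by_cases h : i = j
        · subst h
          simp only [hv, real_inner_smul_left, real_inner_smul_right, hzz, if_pos rfl, if_pos rfl, ↓reduceIte]
          rw [← mul_assoc, ← sq]
          rw [← Real.sqrt_inv, Real.sq_sqrt (by positivity)]
          field_simp
        · have hij : i.1 ≠ j.1 := fun hc => h (Subtype.ext hc)
          simp [hv, real_inner_smul_left, real_inner_smul_right, hzz, hij, h]
      have hper_t : ∀ t : Fin m, ∑ i : {i : Fin n // lam i ≠ 0}, ⟪e t, z i.1⟫_ℝ ^ 2 / lam i.1 ≤ 1 := by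
        intro t
        have h12 := hvon.sum_inner_products_le (e t) (s := Finset.univ)
        have h13 : ‖e t‖ ^ 2 = 1 := by
          rw [honb.1 t]; norm_num
        rw [h13] at h12
        refine le_trans (le_of_eq ?_) h12
        apply Finset.sum_congr rfl
        intro i _
        have hpos : 0 < lam i.1 := hlam_pos i.1 i.2
        rw [Real.norm_eq_abs, sq_abs, hv]
        simp only [real_inner_smul_left]
        rw [real_inner_comm]
        rw [mul_pow, ← Real.sqrt_inv, Real.sq_sqrt (by positivity)]
        field_simp
      have h14 : ∑ i, β i = ∑ i : {i : Fin n // lam i ≠ 0}, S i.1 / lam i.1 := by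
        rw [← Finset.sum_filter_add_sum_filter_not Finset.univ (fun i => lam i = 0)]
        have hz' : ∑ i ∈ Finset.univ.filter (fun i => lam i = 0), β i = 0 := by
          apply Finset.sum_eq_zero
          intro i hi
          have := (Finset.mem_filter.mp hi).2
          simp [hβdef, this]
        rw [hz', zero_add]
        rw [Finset.sum_subtype (Finset.univ.filter (fun i : Fin n => ¬ lam i = 0))
          (p := fun i : Fin n => lam i ≠ 0) (by simp) (fun i => β i)]
        apply Finset.sum_congr rfl
        intro i _
        simp only [hβdef, if_neg i.2]
      rw [h14]
      have h15 : ∑ i : {i : Fin n // lam i ≠ 0}, S i.1 / lam i.1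
          = ∑ t : Fin m, ∑ i : {i : Fin n // lam i ≠ 0}, ⟪e t, z i.1⟫_ℝ ^ 2 / lam i.1 := by
        rw [Finset.sum_comm]
        apply Finset.sum_congr rfl
        intro i _
        rw [hSdef]
        simp only []
        rw [Finset.sum_div]
      rw [h15]
      calc ∑ t : Fin m, ∑ i : {i : Fin n // lam i ≠ 0}, ⟪e t, z i.1⟫_ℝ ^ 2 / lam i.1
          ≤ ∑ _t : Fin m, (1:ℝ) := Finset.sum_le_sum (fun t _ => hper_t t)
        _ = (m : ℝ) := by simp
        _ ≤ (k : ℝ) := by exact_mod_cast hWk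
    have hkey := rearrange_aux hkn lam β hlam_anti hlam_nonneg hβ0 hβ1 hβsum
    -- assemble
    have hfin : ∑ jj, ‖y jj - (W.orthogonalProjectionOnto (y jj) : H)‖ ^ 2
        = ∑ i, lam i - ∑ i, lam i * β i := by
      simp_rw [hpyth W]
      rw [Finset.sum_sub_distrib, hsum_y, hsum_proj]
      congr 1
      exact Finset.sum_congr rfl fun i _ => hSβ i
    rw [hfin]
    have hABnot : Finset.univ.filter (fun i : Fin n => ¬ (i:ℕ) < k) = B := by
      rw [hBdef]; apply Finset.filter_congr; intro i _; simp [not_lt]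
    have hsplitlam : ∑ i, lam i = ∑ i ∈ A, lam i + ∑ i ∈ B, lam i := by
      rw [hAdef, ← hABnot]
      exact (Finset.sum_filter_add_sum_filter_not Finset.univ _ lam).symm
    linarith [hkey]
  · -- equality for W₀
    have hABnot : Finset.univ.filter (fun i : Fin n => ¬ (i:ℕ) < k) = B := by
      rw [hBdef]; apply Finset.filter_congr; intro i _; simp [not_lt]
    have hzmem : ∀ i : Fin n, (i:ℕ) < k → z i ∈ W₀ := by
      intro i hi
      rw [hW₀]
      exact Submodule.subset_span ⟨i, hi, rfl⟩
    have hres : ∀ jj, y jj - ∑ i ∈ A, u i jj • z i = ∑ i ∈ B, u i jj • z i := by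
      intro jj
      rw [hyz jj,
        ← Finset.sum_filter_add_sum_filter_not Finset.univ (fun i : Fin n => (i:ℕ) < k)
          (fun i => u i jj • z i), hABnot, hAdef]
      abel
    have hproj₀ : ∀ jj, (W₀.orthogonalProjectionOnto (y jj) : H) = ∑ i ∈ A, u i jj • z i := by
      intro jj
      rw [Submodule.coe_orthogonalProjectionOnto_apply]
      apply Submodule.eq_starProjection_of_mem_of_inner_eq_zero
      · exact Submodule.sum_mem _ fun i hi =>
          Submodule.smul_mem _ _ (hzmem i (Finset.mem_filter.mp hi).2)
      · intro w hw
        rw [hres jj, real_inner_comm]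
        rw [hW₀] at hw
        induction hw using Submodule.span_induction with
        | mem x hx =>
            obtain ⟨l, hl, rfl⟩ := hx
            rw [inner_sum]
            apply Finset.sum_eq_zero
            intro i hi
            have hik : k ≤ (i:ℕ) := (Finset.mem_filter.mp hi).2
            have hne : l ≠ i := by intro hc; rw [hc] at hl; omega
            rw [real_inner_smul_right, hzz]
            simp [hne]
        | zero => simp
        | add x x' hx hx' ihx ihx' => rw [inner_add_left, ihx, ihx', add_zero]
        | smul a x hx ihx => rw [inner_smul_left, ihx, mul_zero]
    have hresnorm : ∀ jj, ‖y jj - (W₀.orthogonalProjectionOnto (y jj) : H)‖ ^ 2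
        = ∑ i ∈ B, u i jj ^ 2 * lam i := by
      intro jj
      rw [hproj₀ jj, hres jj]
      have hc : ∑ i ∈ B, u i jj • z i = ∑ i : Fin n, (if k ≤ (i:ℕ) then u i jj else 0) • z i := by
        rw [hBdef, Finset.sum_filter]
        apply Finset.sum_congr rfl
        intro i _
        by_cases h : k ≤ (i:ℕ) <;> simp [h]
      rw [hc, hnorm_comb, hBdef, Finset.sum_filter]
      apply Finset.sum_congr rfl
      intro i _
      by_cases h : k ≤ (i:ℕ) <;> simp [h]
    simp_rw [hresnorm]
    rw [Finset.sum_comm]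
    apply Finset.sum_congr rfl
    intro i _
    rw [← Finset.sum_mul]
    simp_rw [sq]
    rw [hu_orth i i]
    simp
end

section
/- Let H be a real inner product space, y₀ ∈ H, and y₁,…,yₙ ∈ H with positive definite Gram matrix V having eigenvalues λ₁ ≥ … ≥ λₙ > 0 and orthonormal eigenvectors u₁,…,uₙ. Let κⱼ = ⟨y₀,yⱼ⟩, α = V⁻¹κ, ŷ = Σⱼ αⱼ yⱼ (the kriging predictor, which is the orthogonal projection of y₀ onto span{y₁,…,yₙ}), and let ỹ be the orthogonal projection of y₀ onto span{z₁,…,z_k} where zᵢ = Σⱼ (uᵢ)ⱼ yⱼ and 1 ≤ k < n. Then 0 ≤ ‖y₀ − ỹ‖² − ‖y₀ − ŷ‖² ≤ ‖α‖² λ_{k+1}, where ‖α‖ is the Euclidean norm of α. -/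
open scoped InnerProductSpace

/-- Error bound of the paper's Theorem 2: comparing pseudo-kriging (projection onto the span of
the first `k` principal components) with exact kriging (`ŷ = ∑ⱼ αⱼ yⱼ`, `α = V⁻¹κ`):
`0 ≤ ‖y₀ − ỹ‖² − ‖y₀ − ŷ‖² ≤ ‖α‖² λ_{k+1}`. -/
theorem pseudo_kriging_error_bound
    {H : Type*} [NormedAddCommGroup H] [InnerProductSpace ℝ H]
    {n k : ℕ} (hk : 1 ≤ k) (hkn : k < n)
    (y₀ : H) (y : Fin n → H)
    (V : Matrix (Fin n) (Fin n) ℝ)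
    (hV : ∀ i j, V i j = ⟪y i, y j⟫_ℝ)
    (hVpd : V.PosDef)
    (lam : Fin n → ℝ)
    (hlam_anti : Antitone lam)
    (hlam_pos : ∀ i, 0 < lam i)
    (u : Fin n → Fin n → ℝ)
    (hu_orth : ∀ i j, (∑ a, u i a * u j a) = if i = j then 1 else 0)
    (hu_eig : ∀ i, V.mulVec (u i) = lam i • u i)
    (κ : Fin n → ℝ)
    (hκ : ∀ j, κ j = ⟪y₀, y j⟫_ℝ)
    (α : Fin n → ℝ)
    (hα : V.mulVec α = κ)
    (yhat : H)
    (hyhat : yhat = ∑ j, α j • y j)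
    (z : Fin n → H)
    (hz : ∀ i, z i = ∑ j, u i j • y j)
    (W₀ : Submodule ℝ H)
    (hW₀ : W₀ = Submodule.span ℝ {v | ∃ i : Fin n, (i : ℕ) < k ∧ v = z i})
    [FiniteDimensional ℝ W₀]
    (ytilde : H)
    (hytilde : ytilde = (W₀.orthogonalProjectionOnto y₀ : H)) :
    0 ≤ ‖y₀ - ytilde‖ ^ 2 - ‖y₀ - yhat‖ ^ 2 ∧
    ‖y₀ - ytilde‖ ^ 2 - ‖y₀ - yhat‖ ^ 2 ≤ (∑ j, (α j) ^ 2) * lam ⟨k, hkn⟩ := by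
  classical
  -- coordinates of α in the eigenbasis
  set c : Fin n → ℝ := fun i => ∑ j, u i j * α j with hc
  -- symmetry of V
  have hVsymm : ∀ a b, V a b = V b a := fun a b => by
    rw [hV, hV, real_inner_comm]
  -- columns of u are orthonormal
  have hUcol : ∀ a b, (∑ i, u i a * u i b) = if a = b then 1 else 0 := by
    let U : Matrix (Fin n) (Fin n) ℝ := Matrix.of u
    have h1 : U * U.transpose = 1 := by
      ext i j
      simpa [U, Matrix.mul_apply, Matrix.one_apply] using hu_orth i j
    have h2 : U.transpose * U = 1 := mul_eq_one_comm.mp h1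
    intro a b
    have := congrFun (congrFun h2 a) b
    simpa [U, Matrix.mul_apply, Matrix.one_apply] using this
  -- recover α from c
  have hα_sum : ∀ j, (∑ i, c i * u i j) = α j := by
    intro j
    have : (∑ i, c i * u i j) = ∑ a, α a * ∑ i, u i a * u i j := by
      simp only [hc, Finset.sum_mul]
      rw [Finset.sum_comm]
      apply Finset.sum_congr rfl
      intro a _
      rw [Finset.mul_sum]
      apply Finset.sum_congr rfl
      intro i _
      ring
    rw [this]
    simp [hUcol]
  -- ∑ c² = ∑ α²
  have hc_norm : (∑ i, c i ^ 2) = ∑ j, (α j) ^ 2 := by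
    have h1 : ∀ i, c i ^ 2 = ∑ j, α j * (c i * u i j) := by
      intro i
      have h2 : c i ^ 2 = c i * ∑ j, u i j * α j := by rw [pow_two]
      rw [h2, Finset.mul_sum]
      exact Finset.sum_congr rfl fun j _ => by ring
    rw [Finset.sum_congr rfl fun i _ => h1 i, Finset.sum_comm]
    apply Finset.sum_congr rfl
    intro j _
    rw [← Finset.mul_sum, hα_sum]
    ring
  -- yhat in the z basis
  have hyhat_z : yhat = ∑ i, c i • z i := by
    rw [hyhat]
    have h1 : ∀ j, α j • y j = ∑ i, (c i * u i j) • y j := by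
      intro j
      rw [← Finset.sum_smul, hα_sum]
    calc (∑ j, α j • y j) = ∑ j, ∑ i, (c i * u i j) • y j := by
          exact Finset.sum_congr rfl fun j _ => h1 j
      _ = ∑ i, ∑ j, (c i * u i j) • y j := Finset.sum_comm
      _ = ∑ i, c i • z i := by
          apply Finset.sum_congr rfl
          intro i _
          rw [hz, Finset.smul_sum]
          exact Finset.sum_congr rfl fun j _ => (mul_smul _ _ _)
  -- inner products of the z's
  have hzz : ∀ i j, ⟪z i, z j⟫_ℝ = if i = j then lam i else 0 := by
    intro i j
    rw [hz i, hz j]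
    rw [sum_inner]
    have h1 : ∀ a, ⟪u i a • y a, ∑ b, u j b • y b⟫_ℝ = u i a * (lam j * u j a) := by
      intro a
      have h2 : ⟪u i a • y a, ∑ b, u j b • y b⟫_ℝ = u i a * ∑ b, V a b * u j b := by
        simp only [inner_sum, real_inner_smul_left, real_inner_smul_right, ← hV]
        rw [Finset.mul_sum]
        exact Finset.sum_congr rfl fun b _ => by ring
      have h3 : (∑ b, V a b * u j b) = V.mulVec (u j) a := rfl
      rw [h2, h3, hu_eig]
      simp
    rw [Finset.sum_congr rfl fun a _ => h1 a]
    have : (∑ a, u i a * (lam j * u j a)) = lam j * ∑ a, u i a * u j a := by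
      rw [Finset.mul_sum]
      exact Finset.sum_congr rfl fun a _ => by ring
    rw [this, hu_orth]
    by_cases hij : i = j <;> simp [hij]
  -- y₀ - yhat is orthogonal to all y's
  have hperp_y : ∀ a, ⟪y₀ - yhat, y a⟫_ℝ = 0 := by
    intro a
    rw [inner_sub_left, hyhat, sum_inner]
    have h1 : (∑ j, ⟪α j • y j, y a⟫_ℝ) = V.mulVec α a := by
      simp only [real_inner_smul_left, Matrix.mulVec, dotProduct, ← hV]
      exact Finset.sum_congr rfl fun j _ => by rw [hVsymm a j]; ring
    rw [h1, hα, hκ]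
    ring
  -- y₀ - yhat is orthogonal to all z's
  have hperp_z : ∀ i, ⟪y₀ - yhat, z i⟫_ℝ = 0 := by
    intro i
    rw [hz, inner_sum]
    simp only [real_inner_smul_right, hperp_y, mul_zero]
    simp
  -- candidate projection
  set F : Finset (Fin n) := Finset.univ.filter (fun i : Fin n => (i : ℕ) < k) with hF
  set w : H := ∑ i ∈ F, c i • z i with hw
  have hwW₀ : w ∈ W₀ := by
    rw [hw, hW₀]
    apply Submodule.sum_mem
    intro i hi
    apply Submodule.smul_mem
    apply Submodule.subset_span
    exact ⟨i, (Finset.mem_filter.mp hi).2, rfl⟩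
  -- ⟪w, z j⟫ for j ∈ F
  have hwz : ∀ j ∈ F, ⟪w, z j⟫_ℝ = c j * lam j := by
    intro j hj
    rw [hw, sum_inner]
    have h1 : ∀ i ∈ F, ⟪c i • z i, z j⟫_ℝ = if i = j then c i * lam i else 0 := by
      intro i _
      rw [real_inner_smul_left, hzz]
      by_cases hij : i = j <;> simp [hij]
    rw [Finset.sum_congr rfl h1, Finset.sum_ite_eq' F j (fun i => c i * lam i)]
    simp [hj]
  have hyz : ∀ j, ⟪yhat, z j⟫_ℝ = c j * lam j := by
    intro j
    rw [hyhat_z, sum_inner]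
    have h1 : ∀ i ∈ Finset.univ (α := Fin n),
        ⟪c i • z i, z j⟫_ℝ = if i = j then c i * lam i else 0 := by
      intro i _
      rw [real_inner_smul_left, hzz]
      by_cases hij : i = j <;> simp [hij]
    rw [Finset.sum_congr rfl h1, Finset.sum_ite_eq' Finset.univ j (fun i => c i * lam i)]
    simp
  -- ytilde = w
  have hyt : ytilde = w := by
    rw [hytilde]
    rw [← Submodule.starProjection_apply]
    apply Submodule.eq_starProjection_of_mem_of_inner_eq_zero (K := W₀) hwW₀
    intro v hv
    rw [hW₀] at hv
    induction hv using Submodule.span_induction with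
    | mem x hx =>
      obtain ⟨i, hik, rfl⟩ := hx
      have hiF : i ∈ F := Finset.mem_filter.mpr ⟨Finset.mem_univ i, hik⟩
      have : ⟪y₀, z i⟫_ℝ = c i * lam i := by
        have := hperp_z i
        rw [inner_sub_left, sub_eq_zero] at this
        rw [this, hyz]
      rw [inner_sub_left, this, hwz i hiF]
      ring
    | zero => simp
    | add x y' hx hy' ihx ihy => rw [inner_add_right, ihx, ihy]; ring
    | smul t x hx ihx => rw [real_inner_smul_right, ihx]; ring
  -- d := yhat - ytilde
  set d : H := ∑ i ∈ Fᶜ, c i • z i with hd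
  have hd_eq : yhat - ytilde = d := by
    rw [hyt, hw, hd, hyhat_z, eq_comm, eq_sub_iff_add_eq, Finset.sum_compl_add_sum]
  -- ⟪y₀ - yhat, d⟫ = 0
  have hperp_d : ⟪y₀ - yhat, d⟫_ℝ = 0 := by
    rw [hd, inner_sum]
    simp only [real_inner_smul_right, hperp_z, mul_zero]
    simp
  -- ‖d‖²
  have hd_norm : ‖d‖ ^ 2 = ∑ i ∈ Fᶜ, c i ^ 2 * lam i := by
    rw [← real_inner_self_eq_norm_sq, hd, sum_inner]
    apply Finset.sum_congr rfl
    intro i hi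
    rw [real_inner_smul_left, inner_sum]
    have h1 : ∀ j ∈ Fᶜ, ⟪z i, c j • z j⟫_ℝ = if j = i then c i * lam i else 0 := by
      intro j _
      rw [real_inner_smul_right, hzz]
      by_cases hij : i = j
      · subst hij; simp
      · simp [hij, Ne.symm hij, fun h : j = i => hij h.symm]
    rw [Finset.sum_congr rfl h1, Finset.sum_ite_eq' Fᶜ i (fun _ => c i * lam i)]
    simp [hi]
    ring
  -- Pythagoras
  have hpyth : ‖y₀ - ytilde‖ ^ 2 = ‖y₀ - yhat‖ ^ 2 + ‖d‖ ^ 2 := by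
    have : y₀ - ytilde = (y₀ - yhat) + d := by rw [← hd_eq]; abel
    rw [this, norm_add_sq_real, hperp_d]
    ring
  have hd_nonneg : 0 ≤ ‖d‖ ^ 2 := sq_nonneg _
  constructor
  · rw [hpyth]; linarith
  · rw [hpyth]
    have hbound : ∑ i ∈ Fᶜ, c i ^ 2 * lam i ≤ (∑ j, (α j) ^ 2) * lam ⟨k, hkn⟩ := by
      have h1 : ∑ i ∈ Fᶜ, c i ^ 2 * lam i ≤ ∑ i ∈ Fᶜ, c i ^ 2 * lam ⟨k, hkn⟩ := by
        apply Finset.sum_le_sum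
        intro i hi
        have hik : k ≤ (i : ℕ) := by
          have := Finset.mem_compl.mp hi
          simpa [hF] using this
        have : lam i ≤ lam ⟨k, hkn⟩ := hlam_anti (by exact hik)
        nlinarith [sq_nonneg (c i)]
      have h2 : ∑ i ∈ Fᶜ, c i ^ 2 * lam ⟨k, hkn⟩ ≤ (∑ i, c i ^ 2) * lam ⟨k, hkn⟩ := by
        rw [← Finset.sum_mul]
        apply mul_le_mul_of_nonneg_right _ (hlam_pos _).le
        exact Finset.sum_le_sum_of_subset_of_nonneg (Finset.subset_univ _)
          (fun i _ _ => sq_nonneg _)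
      rw [← hc_norm]
      linarith
    rw [hd_norm]
    linarith
end

section
/- With D ⊂ ℝ^d compact, H a real Hilbert space, y : D → H continuous, K(s,x) = ⟨y(s),y(x)⟩ with K(x,x) > 0 for all x ∈ D, let Ω ⊆ D be measurable, s₀ ∈ Ω, δ = Δ(Ω), and let W be a closed subspace of H. Then c(δ)·|Ω|·‖y(s₀) − Π_W y(s₀)‖² ≤ 2∫_Ω ‖y(s) − Π_W y(s)‖² ds + 2(1 − c(δ))∫_Ω K(s,s) ds. -/
open scoped InnerProductSpace
open MeasureTheory


private lemma lemma1_upper_aux (c A E U Z : ℝ) (hc : 0 ≤ c) (hE : 0 ≤ E)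
    (hU : 0 ≤ U) (hZ : 0 ≤ Z)
    (hcA : c ≤ A ^ 2) (hAE : |A| * E ^ 2 ≤ (U + Z) * E) :
    c * E ^ 2 ≤ 2 * U ^ 2 + 2 * Z ^ 2 := by
  rcases eq_or_lt_of_le hE with h | h
  · rw [← h]
    nlinarith [sq_nonneg U, sq_nonneg Z]
  · have h2 : |A| * E ≤ U + Z := by
      have h2' : (|A| * E) * E ≤ (U + Z) * E := by nlinarith [hAE]
      exact le_of_mul_le_mul_right h2' h
    have h3 : c * E ^ 2 ≤ (|A| * E) ^ 2 := by
      nlinarith [sq_abs A, mul_le_mul_of_nonneg_right hcA (sq_nonneg E)]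
    nlinarith [sq_nonneg (U - Z), mul_self_le_mul_self (by positivity : (0:ℝ) ≤ |A| * E) h2]

/-- Upper inequality of the paper's Lemma 1:
`c(δ)·|Ω|·‖y(s₀) − Π_W y(s₀)‖² ≤ 2∫_Ω ‖y(s) − Π_W y(s)‖² ds + 2(1 − c(δ))∫_Ω K(s,s) ds`,
where `δ = Δ(Ω)` is the diameter of `Ω` and
`c(δ) = inf{(K(x₁,x₂)/K(x₂,x₂))² : x₁,x₂ ∈ D, ‖x₁−x₂‖ ≤ δ}`. -/
theorem lemma1_upper
    {d : ℕ} {H : Type*} [NormedAddCommGroup H] [InnerProductSpace ℝ H] [CompleteSpace H]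
    (D : Set (EuclideanSpace ℝ (Fin d))) (hD : IsCompact D)
    (y : EuclideanSpace ℝ (Fin d) → H) (hy : ContinuousOn y D)
    (K : EuclideanSpace ℝ (Fin d) → EuclideanSpace ℝ (Fin d) → ℝ)
    (hK : ∀ s x, K s x = ⟪y s, y x⟫_ℝ)
    (hKpos : ∀ x ∈ D, 0 < K x x)
    (c : ℝ → ℝ)
    (hc : ∀ δ, c δ =
      sInf {r : ℝ | ∃ x₁ ∈ D, ∃ x₂ ∈ D, dist x₁ x₂ ≤ δ ∧ r = (K x₁ x₂ / K x₂ x₂) ^ 2})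
    (Ω : Set (EuclideanSpace ℝ (Fin d))) (hΩD : Ω ⊆ D) (hΩ : MeasurableSet Ω)
    (s₀ : EuclideanSpace ℝ (Fin d)) (hs₀ : s₀ ∈ Ω)
    (W : Submodule ℝ H) (hWclosed : IsClosed (W : Set H)) [W.HasOrthogonalProjection] :
    c (Metric.diam Ω) * (volume Ω).toReal * ‖y s₀ - (W.orthogonalProjectionOnto (y s₀) : H)‖ ^ 2 ≤
      2 * (∫ s in Ω, ‖y s - (W.orthogonalProjectionOnto (y s) : H)‖ ^ 2) +
        2 * (1 - c (Metric.diam Ω)) * ∫ s in Ω, K s s := by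
  have hΩbdd : Bornology.IsBounded Ω := hD.isBounded.subset hΩD
  have hvol : volume Ω < ⊤ := hΩbdd.measure_lt_top
  have hs₀D : s₀ ∈ D := hΩD hs₀
  set S : Set ℝ :=
    {r : ℝ | ∃ x₁ ∈ D, ∃ x₂ ∈ D, dist x₁ x₂ ≤ Metric.diam Ω ∧ r = (K x₁ x₂ / K x₂ x₂) ^ 2}
    with hSdef
  have hcS : c (Metric.diam Ω) = sInf S := hc _
  set c₀ := c (Metric.diam Ω) with hc₀
  have hSbdd : BddBelow S := by
    refine ⟨0, fun r hr => ?_⟩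
    obtain ⟨x₁, _, x₂, _, _, hr⟩ := hr
    rw [hr]; positivity
  have hb0 : 0 < K s₀ s₀ := hKpos s₀ hs₀D
  have hSne : S.Nonempty :=
    ⟨(K s₀ s₀ / K s₀ s₀) ^ 2, s₀, hs₀D, s₀, hs₀D, by simp [Metric.diam_nonneg], rfl⟩
  have hge0 : 0 ≤ c₀ := by
    rw [hcS]
    refine le_csInf hSne fun r hr => ?_
    obtain ⟨x₁, _, x₂, _, _, hr⟩ := hr
    rw [hr]; positivity
  have hle1 : c₀ ≤ 1 := by
    have h1 : (1 : ℝ) ∈ S := by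
      refine ⟨s₀, hs₀D, s₀, hs₀D, by simp [Metric.diam_nonneg], ?_⟩
      rw [div_self hb0.ne']; norm_num
    rw [hcS]
    exact csInf_le hSbdd h1
  -- the pointwise inequality
  have key : ∀ s ∈ Ω,
      c₀ * ‖y s₀ - (W.orthogonalProjectionOnto (y s₀) : H)‖ ^ 2 ≤
        2 * ‖y s - (W.orthogonalProjectionOnto (y s) : H)‖ ^ 2 + 2 * (1 - c₀) * K s s := by
    intro s hs
    have hsD : s ∈ D := hΩD hs
    have hk0 : 0 < K s s := hKpos s hsD
    have hdist : dist s s₀ ≤ Metric.diam Ω := Metric.dist_le_diam_of_mem hΩbdd hs hs₀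
    have hsym : K s₀ s = K s s₀ := by rw [hK, hK, real_inner_comm]
    set a := K s s₀ with ha
    set b := K s₀ s₀ with hbdef
    set k := K s s with hkdef
    have h1 : c₀ ≤ (a / b) ^ 2 := by
      rw [hcS]
      exact csInf_le hSbdd ⟨s, hsD, s₀, hs₀D, hdist, rfl⟩
    have h2 : c₀ ≤ (a / k) ^ 2 := by
      rw [hcS]
      refine csInf_le hSbdd ⟨s₀, hs₀D, s, hsD, by rwa [dist_comm], ?_⟩
      rw [hsym]
    have h1' : c₀ * b ^ 2 ≤ a ^ 2 := by
      rw [div_pow] at h1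
      exact (le_div_iff₀ (by positivity)).mp h1
    have h2' : c₀ * k ^ 2 ≤ a ^ 2 := by
      rw [div_pow] at h2
      exact (le_div_iff₀ (by positivity)).mp h2
    have hca : c₀ * (k * b) ≤ a ^ 2 := by
      nlinarith [mul_le_mul h1' h2' (by positivity) (sq_nonneg a), sq_nonneg a,
        mul_pos hk0 hb0]
    set e : H := y s₀ - (W.orthogonalProjectionOnto (y s₀) : H) with he
    set u : H := y s - (W.orthogonalProjectionOnto (y s) : H) with hu
    have he_mem : e ∈ Wᗮ := W.sub_starProjection_mem_orthogonal (y s₀)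
    have horth : ∀ w ∈ W, ⟪w, e⟫_ℝ = 0 := (Submodule.mem_orthogonal W e).mp he_mem
    have hPs : ⟪((W.orthogonalProjectionOnto (y s) : H)), e⟫_ℝ = 0 :=
      horth _ (SetLike.coe_mem _)
    have hPs₀ : ⟪((W.orthogonalProjectionOnto (y s₀) : H)), e⟫_ℝ = 0 :=
      horth _ (SetLike.coe_mem _)
    have h_s₀ : ⟪y s₀, e⟫_ℝ = ‖e‖ ^ 2 := by
      have hy₀ : y s₀ = e + (W.orthogonalProjectionOnto (y s₀) : H) := by
        rw [he]; abel
      rw [hy₀, inner_add_left, hPs₀, real_inner_self_eq_norm_sq]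
      ring
    set z : H := y s - (a / b) • y s₀ with hz
    have hzz : ‖z‖ ^ 2 = k - a ^ 2 / b := by
      rw [← real_inner_self_eq_norm_sq, hz]
      simp only [inner_sub_sub_self, real_inner_smul_left, real_inner_smul_right]
      have e1 : ⟪y s, y s⟫_ℝ = k := (hK s s).symm
      have e2 : ⟪y s, y s₀⟫_ℝ = a := (hK s s₀).symm
      have e3 : ⟪y s₀, y s⟫_ℝ = a := (hK s₀ s).symm.trans hsym
      have e4 : ⟪y s₀, y s₀⟫_ℝ = b := (hK s₀ s₀).symm
      rw [e1, e2, e3, e4]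
      field_simp
      ring
    have hid : (a / b) * ‖e‖ ^ 2 = ⟪u, e⟫_ℝ - ⟪z, e⟫_ℝ := by
      rw [hu, hz, inner_sub_left, inner_sub_left, hPs, real_inner_smul_left, h_s₀]
      ring
    have habs : |a / b| * ‖e‖ ^ 2 ≤ (‖u‖ + ‖z‖) * ‖e‖ := by
      have : |a / b| * ‖e‖ ^ 2 = |(a / b) * ‖e‖ ^ 2| := by
        rw [abs_mul, abs_of_nonneg (sq_nonneg ‖e‖)]
      rw [this, hid]
      calc |⟪u, e⟫_ℝ - ⟪z, e⟫_ℝ| ≤ |⟪u, e⟫_ℝ| + |⟪z, e⟫_ℝ| := abs_sub _ _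
        _ ≤ ‖u‖ * ‖e‖ + ‖z‖ * ‖e‖ :=
            add_le_add (abs_real_inner_le_norm _ _) (abs_real_inner_le_norm _ _)
        _ = (‖u‖ + ‖z‖) * ‖e‖ := by ring
    have hz2 : ‖z‖ ^ 2 ≤ (1 - c₀) * k := by
      have hdiv : c₀ * k ≤ a ^ 2 / b := (le_div_iff₀ hb0).mpr (by nlinarith [hca])
      rw [hzz]; linarith
    have hfin := lemma1_upper_aux c₀ (a / b) ‖e‖ ‖u‖ ‖z‖ hge0 (norm_nonneg e)
      (norm_nonneg u) (norm_nonneg z) h1 habs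
    linarith [hz2, hfin]
  -- integrability
  have hPcont : Continuous fun v : H => (W.orthogonalProjectionOnto v : H) :=
    continuous_subtype_val.comp W.orthogonalProjectionOnto.continuous
  have hf_cont : ContinuousOn
      (fun s => ‖y s - (W.orthogonalProjectionOnto (y s) : H)‖ ^ 2) D :=
    ((hy.sub (hPcont.comp_continuousOn hy)).norm).pow 2
  have hf_int : IntegrableOn
      (fun s => ‖y s - (W.orthogonalProjectionOnto (y s) : H)‖ ^ 2) Ω volume :=
    (hf_cont.integrableOn_compact hD).mono_set hΩD
  have hg_cont : ContinuousOn (fun s => K s s) D := by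
    have heq : (fun s : EuclideanSpace ℝ (Fin d) => K s s) = fun s => ‖y s‖ ^ 2 := by
      funext s; rw [hK, real_inner_self_eq_norm_sq]
    rw [heq]
    exact hy.norm.pow 2
  have hg_int : IntegrableOn (fun s => K s s) Ω volume :=
    (hg_cont.integrableOn_compact hD).mono_set hΩD
  -- integrate the pointwise inequality
  set E := ‖y s₀ - (W.orthogonalProjectionOnto (y s₀) : H)‖ ^ 2 with hE
  have hmono : ∫ s in Ω, (c₀ * E) ≤
      ∫ s in Ω, (2 * ‖y s - (W.orthogonalProjectionOnto (y s) : H)‖ ^ 2 + 2 * (1 - c₀) * K s s) := by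
    refine setIntegral_mono_on (integrableOn_const hvol.ne)
      ((hf_int.const_mul 2).add (hg_int.const_mul (2 * (1 - c₀)))) hΩ ?_
    intro s hs
    exact key s hs
  have hconst : ∫ s in Ω, (c₀ * E) = (volume Ω).toReal * (c₀ * E) := by
    rw [setIntegral_const, smul_eq_mul]; rfl
  have hsplit : ∫ s in Ω, (2 * ‖y s - (W.orthogonalProjectionOnto (y s) : H)‖ ^ 2
        + 2 * (1 - c₀) * K s s) =
      2 * (∫ s in Ω, ‖y s - (W.orthogonalProjectionOnto (y s) : H)‖ ^ 2)
        + 2 * (1 - c₀) * ∫ s in Ω, K s s := by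
    rw [integral_add (hf_int.const_mul 2) (hg_int.const_mul (2 * (1 - c₀))),
      integral_const_mul, integral_const_mul]
  calc c₀ * (volume Ω).toReal * E = (volume Ω).toReal * (c₀ * E) := by ring
    _ = ∫ s in Ω, (c₀ * E) := hconst.symm
    _ ≤ _ := hmono
    _ = _ := hsplit
end

section
/- With D ⊂ ℝ^d compact, H a real Hilbert space, y : D → H continuous, K(s,x) = ⟨y(s),y(x)⟩ with K(x,x) > 0 for all x ∈ D, let Ω ⊆ D be measurable, s₀ ∈ Ω, δ = Δ(Ω), and let W be a closed subspace of H. Then (1/2)∫_Ω ‖y(s) − Π_W y(s)‖² ds − (1 − c(δ))∫_Ω K(s,s) ds ≤ c(δ)·|Ω|·‖y(s₀) − Π_W y(s₀)‖². -/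
open scoped InnerProductSpace
open MeasureTheory

lemma pointwise_aux {H : Type*} [NormedAddCommGroup H] [InnerProductSpace ℝ H] [CompleteSpace H]
    (W : Submodule ℝ H) [W.HasOrthogonalProjection] (a b : H) (cδ : ℝ) (hc0 : 0 ≤ cδ)
    (ha : cδ * (‖a‖ ^ 2) ^ 2 ≤ ⟪a, b⟫_ℝ ^ 2) (hb : cδ * (‖b‖ ^ 2) ^ 2 ≤ ⟪a, b⟫_ℝ ^ 2) :
    (1 / 2) * ‖a - (Submodule.orthogonalProjectionOnto W a : H)‖ ^ 2 - (1 - cδ) * ‖a‖ ^ 2 ≤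
      cδ * ‖b - (Submodule.orthogonalProjectionOnto W b : H)‖ ^ 2 := by
  set sc := Real.sqrt cδ with hsc
  have hsc0 : 0 ≤ sc := Real.sqrt_nonneg _
  have hsc2 : sc ^ 2 = cδ := Real.sq_sqrt hc0
  set lam : ℝ := if 0 ≤ ⟪a, b⟫_ℝ then sc else -sc with hlam
  have hlamabs : |lam| = sc := by
    rw [hlam]; split <;> simp [abs_of_nonneg hsc0]
  have hlamab : lam * ⟪a, b⟫_ℝ = sc * |⟪a, b⟫_ℝ| := by
    rw [hlam]; split
    · rw [abs_of_nonneg (by assumption)]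
    · rw [abs_of_neg (by linarith [not_le.mp (by assumption)])]; ring
  set M := |⟪a, b⟫_ℝ| with hM
  have hM2 : M ^ 2 = ⟪a, b⟫_ℝ ^ 2 := sq_abs _
  have h3a : sc * ‖a‖ ^ 2 ≤ M :=
    (abs_le_of_sq_le_sq' (by rw [mul_pow, hsc2, hM2]; exact ha) (abs_nonneg _)).2
  have h3b : sc * ‖b‖ ^ 2 ≤ M :=
    (abs_le_of_sq_le_sq' (by rw [mul_pow, hsc2, hM2]; exact hb) (abs_nonneg _)).2
  set A := ‖a - (Submodule.orthogonalProjectionOnto W a : H)‖ with hA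
  set B := ‖b - (Submodule.orthogonalProjectionOnto W b : H)‖ with hB
  set X := ‖a - lam • b‖ with hX
  have h1 : A ≤ X + sc * B := by
    have hmem : lam • (Submodule.orthogonalProjectionOnto W b : H) ∈ W := W.smul_mem _ (Submodule.orthogonalProjectionOnto W b).2
    have hmin : A ≤ ‖a - lam • (Submodule.orthogonalProjectionOnto W b : H)‖ := by
      rw [hA, ← Submodule.starProjection_apply, Submodule.starProjection_minimal]
      exact ciInf_le ⟨0, fun r ⟨x, hx⟩ => hx ▸ norm_nonneg _⟩
        (⟨lam • (Submodule.orthogonalProjectionOnto W b : H), hmem⟩ : W)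
    calc A ≤ ‖a - lam • (Submodule.orthogonalProjectionOnto W b : H)‖ := hmin
      _ = ‖(a - lam • b) + lam • (b - (Submodule.orthogonalProjectionOnto W b : H))‖ := by
          congr 1; rw [smul_sub]; abel
      _ ≤ X + ‖lam • (b - (Submodule.orthogonalProjectionOnto W b : H))‖ := norm_add_le _ _
      _ = X + sc * B := by rw [norm_smul, Real.norm_eq_abs, hlamabs]
  have h2 : X ^ 2 = ‖a‖ ^ 2 - 2 * (sc * M) + cδ * ‖b‖ ^ 2 := by
    rw [hX, @norm_sub_sq_real, real_inner_smul_right, norm_smul, mul_pow, Real.norm_eq_abs,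
      sq_abs, ← hlamab]
    have : lam ^ 2 = cδ := by rw [hlam]; split <;> simpa using hsc2
    rw [this]
  have hA0 : 0 ≤ A := norm_nonneg _
  have hB0 : 0 ≤ B := norm_nonneg _
  have hX0 : 0 ≤ X := norm_nonneg _
  nlinarith [sq_nonneg (X - sc * B), sq_nonneg (A - (X + sc * B)),
    mul_le_mul_of_nonneg_left h3a hsc0, mul_le_mul_of_nonneg_left h3b hsc0,
    mul_nonneg hsc0 hB0, sq_nonneg B]

/-- Lower inequality of the paper's Lemma 1:
`(1/2)∫_Ω ‖y(s) − Π_W y(s)‖² ds − (1 − c(δ))∫_Ω K(s,s) ds ≤ c(δ)·|Ω|·‖y(s₀) − Π_W y(s₀)‖²`,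
where `δ = Δ(Ω)` is the diameter of `Ω` and
`c(δ) = inf{(K(x₁,x₂)/K(x₂,x₂))² : x₁,x₂ ∈ D, ‖x₁−x₂‖ ≤ δ}`. -/
theorem lemma1_lower
    {d : ℕ} {H : Type*} [NormedAddCommGroup H] [InnerProductSpace ℝ H] [CompleteSpace H]
    (D : Set (EuclideanSpace ℝ (Fin d))) (hD : IsCompact D)
    (y : EuclideanSpace ℝ (Fin d) → H) (hy : ContinuousOn y D)
    (K : EuclideanSpace ℝ (Fin d) → EuclideanSpace ℝ (Fin d) → ℝ)
    (hK : ∀ s x, K s x = ⟪y s, y x⟫_ℝ)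
    (hKpos : ∀ x ∈ D, 0 < K x x)
    (c : ℝ → ℝ)
    (hc : ∀ δ, c δ =
      sInf {r : ℝ | ∃ x₁ ∈ D, ∃ x₂ ∈ D, dist x₁ x₂ ≤ δ ∧ r = (K x₁ x₂ / K x₂ x₂) ^ 2})
    (Ω : Set (EuclideanSpace ℝ (Fin d))) (hΩD : Ω ⊆ D) (hΩ : MeasurableSet Ω)
    (s₀ : EuclideanSpace ℝ (Fin d)) (hs₀ : s₀ ∈ Ω)
    (W : Submodule ℝ H) (hWclosed : IsClosed (W : Set H)) [W.HasOrthogonalProjection] :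
    (1 / 2) * (∫ s in Ω, ‖y s - (Submodule.orthogonalProjectionOnto W (y s) : H)‖ ^ 2) -
        (1 - c (Metric.diam Ω)) * (∫ s in Ω, K s s) ≤
      c (Metric.diam Ω) * (volume Ω).toReal *
        ‖y s₀ - (Submodule.orthogonalProjectionOnto W (y s₀) : H)‖ ^ 2 := by
  set cδ := c (Metric.diam Ω) with hcδ
  have hΩbd : Bornology.IsBounded Ω := hD.isBounded.subset hΩD
  have hbdd : BddBelow {r : ℝ | ∃ x₁ ∈ D, ∃ x₂ ∈ D,
      dist x₁ x₂ ≤ Metric.diam Ω ∧ r = (K x₁ x₂ / K x₂ x₂) ^ 2} := by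
    refine ⟨0, fun r hr => ?_⟩
    obtain ⟨x₁, _, x₂, _, _, hr⟩ := hr
    rw [hr]; positivity
  have hc0 : 0 ≤ cδ := by
    rw [hcδ, hc]
    apply Real.sInf_nonneg
    rintro r ⟨x₁, _, x₂, _, _, hr⟩
    rw [hr]; positivity
  have hcle : ∀ x₁ ∈ Ω, ∀ x₂ ∈ Ω, cδ ≤ (K x₁ x₂ / K x₂ x₂) ^ 2 := by
    intro x₁ h1 x₂ h2
    rw [hcδ, hc]
    exact csInf_le hbdd ⟨x₁, hΩD h1, x₂, hΩD h2,
      Metric.dist_le_diam_of_mem hΩbd h1 h2, rfl⟩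
  -- derived quadratic bounds
  have hquad : ∀ s ∈ Ω, cδ * (‖y s‖ ^ 2) ^ 2 ≤ ⟪y s, y s₀⟫_ℝ ^ 2 ∧
      cδ * (‖y s₀‖ ^ 2) ^ 2 ≤ ⟪y s, y s₀⟫_ℝ ^ 2 := by
    intro s hs
    have hKs : K s s = ‖y s‖ ^ 2 := by rw [hK, real_inner_self_eq_norm_sq]
    have hKs₀ : K s₀ s₀ = ‖y s₀‖ ^ 2 := by rw [hK, real_inner_self_eq_norm_sq]
    have hKss₀ : K s s₀ = ⟪y s, y s₀⟫_ℝ := hK s s₀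
    have hKs₀s : K s₀ s = ⟪y s, y s₀⟫_ℝ := by rw [hK, real_inner_comm]
    have hps : (0:ℝ) < K s s := hKpos s (hΩD hs)
    have hps₀ : (0:ℝ) < K s₀ s₀ := hKpos s₀ (hΩD hs₀)
    constructor
    · have h := hcle s₀ hs₀ s hs
      rw [div_pow] at h
      have := (le_div_iff₀ (by positivity : (0:ℝ) < (K s s) ^ 2)).mp h
      calc cδ * (‖y s‖ ^ 2) ^ 2 = cδ * (K s s) ^ 2 := by rw [hKs]
        _ ≤ K s₀ s ^ 2 := this
        _ = ⟪y s, y s₀⟫_ℝ ^ 2 := by rw [hKs₀s]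
    · have h := hcle s hs s₀ hs₀
      rw [div_pow] at h
      have := (le_div_iff₀ (by positivity : (0:ℝ) < (K s₀ s₀) ^ 2)).mp h
      calc cδ * (‖y s₀‖ ^ 2) ^ 2 = cδ * (K s₀ s₀) ^ 2 := by rw [hKs₀]
        _ ≤ K s s₀ ^ 2 := this
        _ = ⟪y s, y s₀⟫_ℝ ^ 2 := by rw [hKss₀]
  have key : ∀ s ∈ Ω,
      (1 / 2) * ‖y s - (Submodule.orthogonalProjectionOnto W (y s) : H)‖ ^ 2 - (1 - cδ) * K s s ≤
        cδ * ‖y s₀ - (Submodule.orthogonalProjectionOnto W (y s₀) : H)‖ ^ 2 := by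
    intro s hs
    have hKs : K s s = ‖y s‖ ^ 2 := by rw [hK, real_inner_self_eq_norm_sq]
    rw [hKs]
    exact pointwise_aux W (y s) (y s₀) cδ hc0 (hquad s hs).1 (hquad s hs).2
  -- integrability
  have hvol : volume Ω < ⊤ := lt_of_le_of_lt (measure_mono hΩD) hD.measure_lt_top
  have hcontP : ContinuousOn (fun s => ‖y s - (Submodule.orthogonalProjectionOnto W (y s) : H)‖ ^ 2) D := by
    apply ContinuousOn.pow
    apply ContinuousOn.norm
    exact hy.sub ((continuous_subtype_val.comp (Submodule.orthogonalProjectionOnto W).continuous).comp_continuousOn hy)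
  have hcontK : ContinuousOn (fun s => K s s) D := by
    have : ContinuousOn (fun s => ⟪y s, y s⟫_ℝ) D := ContinuousOn.inner hy hy
    exact this.congr fun s _ => hK s s
  have hintP : IntegrableOn (fun s => ‖y s - (Submodule.orthogonalProjectionOnto W (y s) : H)‖ ^ 2) Ω volume :=
    (hcontP.integrableOn_compact hD).mono_set hΩD
  have hintK : IntegrableOn (fun s => K s s) Ω volume :=
    (hcontK.integrableOn_compact hD).mono_set hΩD
  have step1 :
      (1 / 2) * (∫ s in Ω, ‖y s - (Submodule.orthogonalProjectionOnto W (y s) : H)‖ ^ 2) -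
        (1 - cδ) * (∫ s in Ω, K s s) =
      ∫ s in Ω, ((1 / 2) * ‖y s - (Submodule.orthogonalProjectionOnto W (y s) : H)‖ ^ 2 - (1 - cδ) * K s s) := by
    rw [integral_sub (hintP.const_mul _) (hintK.const_mul _), integral_const_mul, integral_const_mul]
  rw [hcδ] at step1 ⊢
  rw [step1]
  have step2 : ∫ s in Ω, ((1 / 2) * ‖y s - (Submodule.orthogonalProjectionOnto W (y s) : H)‖ ^ 2 -
      (1 - cδ) * K s s) ≤
      ∫ _ in Ω, cδ * ‖y s₀ - (Submodule.orthogonalProjectionOnto W (y s₀) : H)‖ ^ 2 := by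
    apply setIntegral_mono_on
    · exact (hintP.const_mul _).sub (hintK.const_mul _)
    · exact integrableOn_const hvol.ne
    · exact hΩ
    · exact key
  rw [hcδ] at step2
  refine step2.trans ?_
  rw [setIntegral_const, smul_eq_mul, measureReal_def]
  rw [← hcδ]
  ring_nf
  exact le_of_eq (by ring)
end

section
/- Let D ⊂ ℝ^d be compact with |D| > 0, H a real Hilbert space, y : D → H continuous, K(s,x) = ⟨y(s),y(x)⟩ with K(x,x) > 0 on D. Let s₁,…,sₙ be distinct points of D with Voronoi cells Dᵢ = {x ∈ D : ‖x−sᵢ‖ = minⱼ‖x−sⱼ‖}, δᵢ = Δ(Dᵢ), and suppose maxᵢ|Dᵢ| ≤ γ·minᵢ|Dᵢ| for some γ ≥ 1. Let λ_{n,1} ≥ … ≥ λ_{n,n} be the eigenvalues of the kernel matrix Vₙ = (K(sᵢ,sⱼ)). Then for every subspace W ⊆ H with dim W ≤ k (1 ≤ k < n): (minᵢ c(δᵢ))·(nγ)⁻¹·|D|·Σ_{i=k+1}^n λ_{n,i} ≤ 2∫_D ‖y(s) − Π_W y(s)‖² ds + 2(1 − minᵢ c(δᵢ))∫_D K(s,s)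 ds. -/
open scoped InnerProductSpace
open MeasureTheory
open Finset

section AuxTheorem1

variable {H : Type*} [NormedAddCommGroup H] [InnerProductSpace ℝ H] [CompleteSpace H]

lemma bessel_finset {ι : Type*} [DecidableEq ι]
    (J : Finset ι) (v : ι → H)
    (hv : ∀ i ∈ J, ∀ j ∈ J, ⟪v i, v j⟫_ℝ = if i = j then 1 else 0)
    (x : H) : ∑ j ∈ J, ⟪v j, x⟫_ℝ ^ 2 ≤ ‖x‖ ^ 2 := by
  have h0 : (0:ℝ) ≤ ⟪x - ∑ j ∈ J, ⟪v j, x⟫_ℝ • v j, x - ∑ j ∈ J, ⟪v j, x⟫_ℝ • v j⟫_ℝ :=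
    real_inner_self_nonneg
  have hwx : ⟪∑ j ∈ J, ⟪v j, x⟫_ℝ • v j, x⟫_ℝ = ∑ j ∈ J, ⟪v j, x⟫_ℝ ^ 2 := by
    rw [sum_inner]
    refine Finset.sum_congr rfl fun j hj => ?_
    rw [real_inner_smul_left, sq]
  have hxw : ⟪x, ∑ j ∈ J, ⟪v j, x⟫_ℝ • v j⟫_ℝ = ∑ j ∈ J, ⟪v j, x⟫_ℝ ^ 2 := by
    rw [inner_sum]
    refine Finset.sum_congr rfl fun j hj => ?_
    rw [real_inner_smul_right, real_inner_comm, sq]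
  have hww : ⟪∑ j ∈ J, ⟪v j, x⟫_ℝ • v j, ∑ j ∈ J, ⟪v j, x⟫_ℝ • v j⟫_ℝ
      = ∑ j ∈ J, ⟪v j, x⟫_ℝ ^ 2 := by
    rw [sum_inner]
    refine Finset.sum_congr rfl fun i hi => ?_
    rw [real_inner_smul_left, inner_sum]
    rw [Finset.sum_congr rfl (fun j hj => by rw [real_inner_smul_right, hv i hi j hj])]
    simp [mul_ite, mul_one, mul_zero, Finset.sum_ite_eq, hi, sq]
  rw [inner_sub_sub_self, hxw, hwx, hww, real_inner_self_eq_norm_sq] at h0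
  linarith

lemma rearrange {n k : ℕ} (hkn : k < n) (lam t : Fin n → ℝ) (hanti : Antitone lam)
    (hpos : ∀ j, 0 ≤ lam j) (ht0 : ∀ j, 0 ≤ t j) (ht1 : ∀ j, t j ≤ 1)
    (hsum : ∑ j, t j ≤ k) :
    ∑ j, lam j * t j ≤ ∑ j ∈ univ.filter (fun j : Fin n => (j : ℕ) < k), lam j := by
  classical
  set κ : Fin n := ⟨k, hkn⟩ with hκ
  set Hd := univ.filter (fun j : Fin n => (j : ℕ) < k) with hHd
  set Tl := univ.filter (fun j : Fin n => ¬ (j : ℕ) < k) with hTl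
  have hcard : Hd.card = k := by
    have : Hd = Finset.map (Fin.castLEEmb hkn.le) Finset.univ := by
      ext j
      simp only [hHd, mem_filter, mem_univ, true_and, Finset.mem_map, Fin.castLEEmb]
      constructor
      · intro hj
        refine ⟨⟨j, hj⟩, ?_⟩
        simp [Fin.ext_iff]
      · rintro ⟨i, -, rfl⟩; simpa using i.isLt
    simp [this]
  have hsplit : ∑ j, lam j * t j = ∑ j ∈ Hd, lam j * t j + ∑ j ∈ Tl, lam j * t j :=
    (Finset.sum_filter_add_sum_filter_not univ _ _).symm
  have htail : ∑ j ∈ Tl, lam j * t j ≤ lam κ * ∑ j ∈ Tl, t j := by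
    rw [Finset.mul_sum]
    refine Finset.sum_le_sum fun j hj => ?_
    have hkj : κ ≤ j := by
      simp only [hTl, mem_filter, mem_univ, true_and, not_lt] at hj
      rw [Fin.le_def]; exact hj
    exact mul_le_mul_of_nonneg_right (hanti hkj) (ht0 j)
  have htsum : ∑ j ∈ Tl, t j ≤ (k : ℝ) - ∑ j ∈ Hd, t j := by
    have : ∑ j ∈ Hd, t j + ∑ j ∈ Tl, t j = ∑ j, t j :=
      Finset.sum_filter_add_sum_filter_not univ _ _
    linarith
  have hfin : lam κ * ((k:ℝ) - ∑ j ∈ Hd, t j) = ∑ j ∈ Hd, lam κ * (1 - t j) := by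
    have hone : ∑ j ∈ Hd, ((1:ℝ) - t j) = (k:ℝ) - ∑ j ∈ Hd, t j := by
      rw [Finset.sum_sub_distrib, Finset.sum_const, hcard]; simp
    rw [← Finset.mul_sum, hone]
  have hlast : ∑ j ∈ Hd, lam j * t j + ∑ j ∈ Hd, lam κ * (1 - t j) ≤ ∑ j ∈ Hd, lam j := by
    rw [← Finset.sum_add_distrib]
    refine Finset.sum_le_sum fun j hj => ?_
    have hjk : j ≤ κ := by
      simp only [hHd, mem_filter, mem_univ, true_and] at hj
      exact le_of_lt (by exact hj : (j:ℕ) < k)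
    nlinarith [hanti hjk, ht1 j, ht0 j, hpos j]
  have hκpos : 0 ≤ lam κ := hpos κ
  calc ∑ j, lam j * t j = ∑ j ∈ Hd, lam j * t j + ∑ j ∈ Tl, lam j * t j := hsplit
    _ ≤ ∑ j ∈ Hd, lam j * t j + lam κ * ∑ j ∈ Tl, t j := by linarith
    _ ≤ ∑ j ∈ Hd, lam j * t j + lam κ * ((k:ℝ) - ∑ j ∈ Hd, t j) := by
        have := mul_le_mul_of_nonneg_left htsum hκpos; linarith
    _ = ∑ j ∈ Hd, lam j * t j + ∑ j ∈ Hd, lam κ * (1 - t j) := by rw [hfin]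
    _ ≤ ∑ j ∈ Hd, lam j := hlast


lemma tail_sum_le_proj_error {n k : ℕ} (hkn : k < n) (z : Fin n → H)
    (V : Matrix (Fin n) (Fin n) ℝ) (hV : ∀ i j, V i j = ⟪z i, z j⟫_ℝ)
    (lam : Fin n → ℝ) (hlam_anti : Antitone lam)
    (u : Fin n → Fin n → ℝ)
    (hu_orth : ∀ i j, (∑ a, u i a * u j a) = if i = j then 1 else 0)
    (hu_eig : ∀ i, V.mulVec (u i) = lam i • u i)
    (W : Submodule ℝ H) [FiniteDimensional ℝ W] (hW : Module.finrank ℝ W ≤ k) :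
    ∑ i ∈ univ.filter (fun i : Fin n => k ≤ (i : ℕ)), lam i ≤
      ∑ a, ‖z a - (W.orthogonalProjection (z a) : H)‖ ^ 2 := by
  classical
  set φ : Fin n → H := fun j => ∑ a, u j a • z a with hφ
  set ψ : Fin n → H := fun a => z a - (W.orthogonalProjection (z a) : H) with hψ
  set P : H →L[ℝ] H := W.subtypeL.comp (W.orthogonalProjection) with hP
  have hPz : ∀ v : H, P v = (W.orthogonalProjection v : H) := fun v => rfl
  -- Gram relations
  have gram : ∀ i j, ⟪φ i, φ j⟫_ℝ = lam j * (if i = j then 1 else 0) := by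
    intro i j
    have hzφ : ∀ a, ⟪z a, φ j⟫_ℝ = lam j * u j a := by
      intro a
      have h1 : ⟪z a, φ j⟫_ℝ = ∑ b, u j b * ⟪z a, z b⟫_ℝ := by
        simp only [hφ, inner_sum]
        exact Finset.sum_congr rfl fun b _ => real_inner_smul_right _ _ _
      have h2 : V.mulVec (u j) a = ∑ b, u j b * ⟪z a, z b⟫_ℝ := by
        simp only [Matrix.mulVec, dotProduct, hV]
        exact Finset.sum_congr rfl fun b _ => by ring
      have h3 := congrFun (hu_eig j) a
      rw [h2] at h3
      rw [h1, h3]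
      simp [mul_comm]
    have h4 : ⟪φ i, φ j⟫_ℝ = ∑ a, u i a * (lam j * u j a) := by
      simp only [hφ, sum_inner]
      exact Finset.sum_congr rfl fun a _ => by rw [real_inner_smul_left, hzφ a]
    rw [h4, ← hu_orth i j, Finset.mul_sum]
    exact Finset.sum_congr rfl fun a _ => by ring
  have lam_eq : ∀ j, lam j = ‖φ j‖ ^ 2 := by
    intro j
    have := gram j j
    rw [if_pos rfl, mul_one, real_inner_self_eq_norm_sq] at this
    exact this.symm
  have lam_nonneg : ∀ j, 0 ≤ lam j := fun j => (lam_eq j) ▸ sq_nonneg _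
  -- column orthonormality
  have hcol : ∀ a b, (∑ j, u j a * u j b) = if a = b then 1 else 0 := by
    have hUUt : (Matrix.of u) * (Matrix.of u).transpose = 1 := by
      ext i j
      simpa [Matrix.mul_apply, Matrix.one_apply] using hu_orth i j
    have hUtU := mul_eq_one_comm.mp hUUt
    intro a b
    have h := congrFun (congrFun hUtU a) b
    simpa [Matrix.mul_apply, Matrix.one_apply] using h
  -- χ expansion
  have hχ : ∀ j, φ j - P (φ j) = ∑ a, u j a • ψ a := by
    intro j
    have hmap : P (φ j) = ∑ a, u j a • P (z a) := by
      simp only [hφ, map_sum, _root_.map_smul]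
    simp only [hφ, hψ, hmap, ← hPz, ← Finset.sum_sub_distrib, ← smul_sub]
    rw [map_sum]; simp only [_root_.map_smul, ← Finset.sum_sub_distrib, ← smul_sub]
  have hGsum : ∑ j, ‖φ j - P (φ j)‖ ^ 2 = ∑ a, ‖ψ a‖ ^ 2 := by
    have hexp : ∀ j, ‖φ j - P (φ j)‖ ^ 2 = ∑ a, ∑ b, u j a * u j b * ⟪ψ a, ψ b⟫_ℝ := by
      intro j
      rw [← real_inner_self_eq_norm_sq, hχ j, sum_inner]
      refine Finset.sum_congr rfl fun a _ => ?_
      rw [real_inner_smul_left, inner_sum, Finset.mul_sum]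
      exact Finset.sum_congr rfl fun b _ => by rw [real_inner_smul_right]; ring
    calc ∑ j, ‖φ j - P (φ j)‖ ^ 2
        = ∑ a, ∑ b, (∑ j, u j a * u j b) * ⟪ψ a, ψ b⟫_ℝ := by
          rw [Finset.sum_congr rfl fun j (_ : j ∈ univ) => hexp j, Finset.sum_comm]
          refine Finset.sum_congr rfl fun a _ => ?_
          rw [Finset.sum_comm]
          exact Finset.sum_congr rfl fun b _ => by rw [Finset.sum_mul]
      _ = ∑ a, ‖ψ a‖ ^ 2 := by
          refine Finset.sum_congr rfl fun a _ => ?_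
          rw [Finset.sum_congr rfl fun b (_ : b ∈ univ) => by rw [hcol a b]]
          simp [Finset.sum_ite_eq, real_inner_self_eq_norm_sq]
  -- Pythagoras
  have pyth : ∀ j, lam j = ‖P (φ j)‖ ^ 2 + ‖φ j - P (φ j)‖ ^ 2 := by
    intro j
    have horth : ⟪P (φ j), φ j - P (φ j)⟫_ℝ = 0 := by
      rw [real_inner_comm, hPz]
      exact W.starProjection_inner_eq_zero (φ j) _ (W.orthogonalProjection (φ j)).2
    have hsumeq : P (φ j) + (φ j - P (φ j)) = φ j := by abel
    have h5 : ‖φ j‖ ^ 2 = ‖P (φ j)‖ ^ 2 + ‖φ j - P (φ j)‖ ^ 2 := by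
      conv_lhs => rw [← hsumeq]
      rw [norm_add_sq_real, horth]
      ring
    rw [lam_eq j, h5]
  set B : Fin n → ℝ := fun j => ‖P (φ j)‖ ^ 2 with hB
  set t : Fin n → ℝ := fun j => if lam j = 0 then 0 else B j / lam j with ht
  have hB0 : ∀ j, 0 ≤ B j := fun j => sq_nonneg _
  have hBle : ∀ j, B j ≤ lam j := fun j => by
    have := pyth j
    have h2 : (0:ℝ) ≤ ‖φ j - P (φ j)‖ ^ 2 := sq_nonneg _
    simp only [hB]; linarith
  have hBt : ∀ j, B j = lam j * t j := by
    intro j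
    by_cases h : lam j = 0
    · have hφ0 : φ j = 0 := by
        have h1 : ‖φ j‖ ^ 2 = 0 := by rw [← lam_eq j, h]
        have := pow_eq_zero_iff (n := 2) (by norm_num) |>.mp h1
        exact norm_eq_zero.mp this
      simp [ht, h, hB, hφ0]
    · simp only [ht, if_neg h]
      field_simp
  have ht0 : ∀ j, 0 ≤ t j := by
    intro j
    by_cases h : lam j = 0
    · simp [ht, h]
    · simp only [ht, if_neg h]
      exact div_nonneg (hB0 j) (lam_nonneg j)
  have ht1 : ∀ j, t j ≤ 1 := by
    intro j
    by_cases h : lam j = 0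
    · simp [ht, h]
    · simp only [ht, if_neg h]
      exact div_le_one_of_le₀ (hBle j) (lam_nonneg j)
  -- Bessel bound on the sum of t
  have htsum : ∑ j, t j ≤ (k : ℝ) := by
    set J : Finset (Fin n) := univ.filter (fun j => lam j ≠ 0) with hJ
    set v : Fin n → H := fun j => (Real.sqrt (lam j))⁻¹ • φ j with hv
    have hvon : ∀ i ∈ J, ∀ j ∈ J, ⟪v i, v j⟫_ℝ = if i = j then 1 else 0 := by
      intro i hi j hj
      simp only [hv, real_inner_smul_left, real_inner_smul_right, gram i j]
      by_cases h : i = j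
      · subst h
        simp only [hJ, Finset.mem_filter] at hi
        have hpos : 0 < lam i := lt_of_le_of_ne (lam_nonneg i) (Ne.symm hi.2)
        have hs : Real.sqrt (lam i) ≠ 0 := by positivity
        simp only [eq_self_iff_true, if_true, mul_one]
        field_simp
        rw [Real.sq_sqrt hpos.le]
      · simp [h]
    set e := stdOrthonormalBasis ℝ W with he
    have htj : ∀ j ∈ J, t j = ∑ l, ⟪v j, ((e l : W) : H)⟫_ℝ ^ 2 := by
      intro j hj
      simp only [hJ, Finset.mem_filter] at hj
      have hlj : lam j ≠ 0 := hj.2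
      have hpos : 0 < lam j := lt_of_le_of_ne (lam_nonneg j) (Ne.symm hlj)
      set w : W := W.orthogonalProjection (φ j) with hw
      have hBj : B j = ∑ l, ⟪((e l : W) : H), φ j⟫_ℝ ^ 2 := by
        have h1 : B j = ⟪w, w⟫_ℝ := by
          simp only [hB, hPz, ← Submodule.coe_inner, real_inner_self_eq_norm_sq, hw,
            Submodule.coe_norm]
        have h2 : ⟪w, w⟫_ℝ = ∑ l, ⟪w, e l⟫_ℝ * ⟪e l, w⟫_ℝ := (e.sum_inner_mul_inner w w).symm
        have h3 : ∀ l, ⟪(e l : W), w⟫_ℝ = ⟪((e l : W) : H), φ j⟫_ℝ := by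
          intro l
          have h4 : ⟪φ j - (w : H), ((e l : W) : H)⟫_ℝ = 0 :=
            W.starProjection_inner_eq_zero (φ j) _ (e l).2
          have h5 : ⟪(e l : W), w⟫_ℝ = ⟪((e l : W) : H), (w : H)⟫_ℝ := rfl
          rw [inner_sub_left] at h4
          have c1 : ⟪((e l : W) : H), (w : H)⟫_ℝ = ⟪(w : H), ((e l : W) : H)⟫_ℝ :=
            real_inner_comm _ _
          have c2 : ⟪((e l : W) : H), φ j⟫_ℝ = ⟪φ j, ((e l : W) : H)⟫_ℝ :=
            real_inner_comm _ _
          rw [h5]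
          linarith
        rw [h1, h2]
        refine Finset.sum_congr rfl fun l _ => ?_
        have c3 : ⟪w, e l⟫_ℝ = ⟪e l, w⟫_ℝ := real_inner_comm _ _
        rw [c3, h3 l, sq]
      have hterm : ∀ l, ⟪v j, ((e l : W) : H)⟫_ℝ ^ 2 = ⟪((e l : W) : H), φ j⟫_ℝ ^ 2 / lam j := by
        intro l
        simp only [hv, real_inner_smul_left]
        rw [mul_pow, real_inner_comm]
        rw [← Real.sqrt_inv, Real.sq_sqrt (by positivity)]
        rw [div_eq_inv_mul]
      rw [Finset.sum_congr rfl fun l _ => hterm l, ← Finset.sum_div, ← hBj]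
      simp only [ht, if_neg hlj]
    have hzero : ∀ j ∈ (univ : Finset (Fin n)), j ∉ J → t j = 0 := by
      intro j _ hj
      simp only [hJ, Finset.mem_filter, Finset.mem_univ, true_and, not_not] at hj
      simp [ht, hj]
    have h1 : ∑ j, t j = ∑ j ∈ J, t j := (Finset.sum_subset (Finset.subset_univ J) hzero).symm
    have h2 : ∑ j ∈ J, t j = ∑ l, ∑ j ∈ J, ⟪v j, ((e l : W) : H)⟫_ℝ ^ 2 := by
      rw [Finset.sum_congr rfl htj, Finset.sum_comm]
    have h3 : ∀ l, ∑ j ∈ J, ⟪v j, ((e l : W) : H)⟫_ℝ ^ 2 ≤ 1 := by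
      intro l
      have hb := bessel_finset J v hvon ((e l : W) : H)
      have hnorm : ‖((e l : W) : H)‖ = 1 := by
        rw [← Submodule.coe_norm]
        exact e.orthonormal.1 l
      rw [hnorm] at hb
      simpa using hb
    have h4 : ∑ j ∈ J, t j ≤ (Module.finrank ℝ W : ℝ) := by
      rw [h2]
      calc ∑ l, ∑ j ∈ J, ⟪v j, ((e l : W) : H)⟫_ℝ ^ 2 ≤ ∑ l : Fin (Module.finrank ℝ W), (1:ℝ) :=
            Finset.sum_le_sum fun l _ => h3 l
        _ = (Module.finrank ℝ W : ℝ) := by simp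
    rw [h1]
    exact h4.trans (by exact_mod_cast hW)
  -- rearrangement and conclusion
  have hBsum : ∑ j, B j ≤ ∑ j ∈ univ.filter (fun j : Fin n => (j : ℕ) < k), lam j := by
    rw [Finset.sum_congr rfl fun j (_ : j ∈ univ) => hBt j]
    exact rearrange hkn lam t hlam_anti lam_nonneg ht0 ht1 htsum
  have htotal : ∑ j, lam j = ∑ j, B j + ∑ a, ‖ψ a‖ ^ 2 := by
    rw [← hGsum, ← Finset.sum_add_distrib]
    exact Finset.sum_congr rfl fun j _ => pyth j
  have hfiltereq : univ.filter (fun j : Fin n => ¬ k ≤ (j : ℕ))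
      = univ.filter (fun j : Fin n => (j : ℕ) < k) := by
    ext j; simp [not_le]
  have hsplitlam : ∑ j ∈ univ.filter (fun j : Fin n => k ≤ (j : ℕ)), lam j
      + ∑ j ∈ univ.filter (fun j : Fin n => (j : ℕ) < k), lam j = ∑ j, lam j := by
    rw [← hfiltereq]
    exact Finset.sum_filter_add_sum_filter_not univ _ lam
  have hS0 : (0:ℝ) ≤ ∑ a, ‖ψ a‖ ^ 2 := Finset.sum_nonneg fun a _ => sq_nonneg _
  simp only [hψ] at *
  linarith


lemma bisector_null {d : ℕ} (p q : EuclideanSpace ℝ (Fin d)) (hpq : p ≠ q) :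
    volume {x : EuclideanSpace ℝ (Fin d) | dist x p = dist x q} = 0 := by
  have hset : {x : EuclideanSpace ℝ (Fin d) | dist x p = dist x q}
      = (AffineSubspace.perpBisector p q : Set (EuclideanSpace ℝ (Fin d))) := by
    ext x
    simp [AffineSubspace.mem_perpBisector_iff_dist_eq]
  rw [hset]
  exact Measure.addHaar_affineSubspace volume _ (by simpa using hpq)

variable {H : Type*} [NormedAddCommGroup H] [InnerProductSpace ℝ H] [CompleteSpace H]

lemma norm_err_le (W : Submodule ℝ H) [W.HasOrthogonalProjection] (v : H) :
    ‖v - (W.orthogonalProjection v : H)‖ ≤ ‖v‖ := by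
  have horth : ⟪v - (W.orthogonalProjection v : H), (W.orthogonalProjection v : H)⟫_ℝ = 0 :=
    W.starProjection_inner_eq_zero v _ (W.orthogonalProjection v).2
  have hsum : (v - (W.orthogonalProjection v : H)) + (W.orthogonalProjection v : H) = v := by abel
  have h2 : ‖v‖ ^ 2 = ‖v - (W.orthogonalProjection v : H)‖ ^ 2
      + ‖(W.orthogonalProjection v : H)‖ ^ 2 := by
    conv_lhs => rw [← hsum]
    rw [norm_add_sq_real, horth]
    ring
  nlinarith [norm_nonneg (v - (W.orthogonalProjection v : H)), norm_nonneg v,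
    sq_nonneg ‖(W.orthogonalProjection v : H)‖]

/-- The pointwise inequality of Lemma 1. -/
lemma pointwise_ineq (W : Submodule ℝ H) [W.HasOrthogonalProjection]
    (zz ww : H) (cm : ℝ) (hcm0 : 0 ≤ cm)
    (hp : 0 < ⟪ww, ww⟫_ℝ) (hq : 0 < ⟪zz, zz⟫_ℝ)
    (c1 : cm ≤ (⟪ww, zz⟫_ℝ / ⟪zz, zz⟫_ℝ) ^ 2)
    (c2 : cm ≤ (⟪ww, zz⟫_ℝ / ⟪ww, ww⟫_ℝ) ^ 2) :
    cm * ‖zz - (W.orthogonalProjection zz : H)‖ ^ 2 ≤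
      2 * ‖ww - (W.orthogonalProjection ww : H)‖ ^ 2 + 2 * (1 - cm) * ⟪ww, ww⟫_ℝ := by
  set p := ⟪ww, ww⟫_ℝ
  set q := ⟪zz, zz⟫_ℝ
  set ip := ⟪ww, zz⟫_ℝ
  set α := ip / q with hα
  set Ez := zz - (W.orthogonalProjection zz : H) with hEz
  set Ew := ww - (W.orthogonalProjection ww : H) with hEw
  -- error of α•zz
  have hEsmul : (α • zz) - (W.orthogonalProjection (α • zz) : H) = α • Ez := by
    have h1 : (W.orthogonalProjection (α • zz) : H) = α • (W.orthogonalProjection zz : H) := by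
      rw [_root_.map_smul, Submodule.coe_smul]
    rw [h1, hEz, ← smul_sub]
  -- triangle inequality + contraction
  have htri : ‖α • Ez‖ ≤ ‖Ew‖ + ‖ww - α • zz‖ := by
    have hlin : α • Ez = Ew - ((ww - α • zz) - (W.orthogonalProjection (ww - α • zz) : H)) := by
      have h2 : (W.orthogonalProjection (ww - α • zz) : H)
          = (W.orthogonalProjection ww : H) - (W.orthogonalProjection (α • zz) : H) := by
        rw [map_sub, Submodule.coe_sub]
      rw [← hEsmul, h2, hEw]
      abel
    rw [hlin]
    refine (norm_sub_le _ _).trans ?_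
    exact add_le_add le_rfl (norm_err_le W _)
  have hEz0 : 0 ≤ ‖Ez‖ := norm_nonneg _
  have hEw0 : 0 ≤ ‖Ew‖ := norm_nonneg _
  have hna : ‖α • Ez‖ = |α| * ‖Ez‖ := by rw [norm_smul, Real.norm_eq_abs]
  -- squared triangle
  have hsq : α ^ 2 * ‖Ez‖ ^ 2 ≤ 2 * ‖Ew‖ ^ 2 + 2 * ‖ww - α • zz‖ ^ 2 := by
    have h1 : |α| * ‖Ez‖ ≤ ‖Ew‖ + ‖ww - α • zz‖ := hna ▸ htri
    have h2 : (|α| * ‖Ez‖) ^ 2 ≤ (‖Ew‖ + ‖ww - α • zz‖) ^ 2 := by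
      refine pow_le_pow_left₀ (by positivity) h1 2
    have h3 : (|α| * ‖Ez‖) ^ 2 = α ^ 2 * ‖Ez‖ ^ 2 := by
      rw [mul_pow, sq_abs]
    nlinarith [sq_nonneg (‖Ew‖ - ‖ww - α • zz‖)]
  -- norm of residual
  have hres : ‖ww - α • zz‖ ^ 2 = p - ip ^ 2 / q := by
    rw [← real_inner_self_eq_norm_sq, inner_sub_sub_self]
    rw [real_inner_smul_right, real_inner_smul_left, real_inner_smul_left,
      real_inner_smul_right]
    have : ⟪zz, ww⟫_ℝ = ip := real_inner_comm _ _
    rw [this]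
    field_simp [hα]
    change (p - α * ip - α * ip + α ^ 2 * q) * q = p * q - ip ^ 2
    rw [hα]; field_simp <;> ring
  -- key: cm * p * q ≤ ip ^ 2
  have hkey : cm * (p * q) ≤ ip ^ 2 := by
    have f1 : cm * q ^ 2 ≤ ip ^ 2 := by
      have h := c1
      rw [hα, div_pow] at h
      exact (le_div_iff₀ (by positivity)).mp h
    have f2 : cm * p ^ 2 ≤ ip ^ 2 := by
      have h := c2
      rw [div_pow] at h
      exact (le_div_iff₀ (by positivity)).mp h
    rcases le_total p q with h | h
    · nlinarith
    · nlinarith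
  -- residual bound
  have hres2 : ‖ww - α • zz‖ ^ 2 ≤ (1 - cm) * p := by
    rw [hres]
    have : cm * p ≤ ip ^ 2 / q := by
      rw [le_div_iff₀ hq]
      calc cm * p * q = cm * (p * q) := by ring
        _ ≤ ip ^ 2 := hkey
    linarith
  -- cm ≤ α²
  have hcα : cm * ‖Ez‖ ^ 2 ≤ α ^ 2 * ‖Ez‖ ^ 2 := by
    have : cm ≤ α ^ 2 := by rw [hα]; exact c1
    nlinarith [sq_nonneg ‖Ez‖]
  calc cm * ‖Ez‖ ^ 2 ≤ α ^ 2 * ‖Ez‖ ^ 2 := hcα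
    _ ≤ 2 * ‖Ew‖ ^ 2 + 2 * ‖ww - α • zz‖ ^ 2 := hsq
    _ ≤ 2 * ‖Ew‖ ^ 2 + 2 * ((1 - cm) * p) := by linarith
    _ = 2 * ‖Ew‖ ^ 2 + 2 * (1 - cm) * p := by ring


end AuxTheorem1

/-- Core finite-sample inequality in the proof of the paper's Theorem 1: with Voronoi cells
`Dᵢ` of the distinct sampling points `s₁,…,sₙ ∈ D`, `δᵢ = Δ(Dᵢ)`,
`maxᵢ|Dᵢ| ≤ γ·minᵢ|Dᵢ|`, and `λ_{n,1} ≥ … ≥ λ_{n,n}` the eigenvalues of the kernel matrix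
`Vₙ = (K(sᵢ,sⱼ))`, every subspace `W ⊆ H` with `dim W ≤ k` satisfies
`(minᵢ c(δᵢ))·(nγ)⁻¹·|D|·∑_{i>k} λ_{n,i}
  ≤ 2∫_D ‖y − Π_W y‖² + 2(1 − minᵢ c(δᵢ))∫_D K(s,s) ds`. -/
theorem theorem1_core_inequality
    {d : ℕ} {H : Type*} [NormedAddCommGroup H] [InnerProductSpace ℝ H] [CompleteSpace H]
    (D : Set (EuclideanSpace ℝ (Fin d))) (hD : IsCompact D)
    (hDpos : 0 < (volume D).toReal)
    (y : EuclideanSpace ℝ (Fin d) → H) (hy : ContinuousOn y D)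
    (K : EuclideanSpace ℝ (Fin d) → EuclideanSpace ℝ (Fin d) → ℝ)
    (hK : ∀ s x, K s x = ⟪y s, y x⟫_ℝ)
    (hKpos : ∀ x ∈ D, 0 < K x x)
    (c : ℝ → ℝ)
    (hc : ∀ δ, c δ =
      sInf {r : ℝ | ∃ x₁ ∈ D, ∃ x₂ ∈ D, dist x₁ x₂ ≤ δ ∧ r = (K x₁ x₂ / K x₂ x₂) ^ 2})
    {n k : ℕ} (hk : 1 ≤ k) (hkn : k < n)
    (s : Fin n → EuclideanSpace ℝ (Fin d)) (hs_mem : ∀ i, s i ∈ D)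
    (hs_inj : Function.Injective s)
    (Di : Fin n → Set (EuclideanSpace ℝ (Fin d)))
    (hDi : ∀ i, Di i = {x ∈ D | ∀ j, dist x (s i) ≤ dist x (s j)})
    (γ : ℝ) (hγ : 1 ≤ γ)
    (hbal : ∀ i j, (volume (Di i)).toReal ≤ γ * (volume (Di j)).toReal)
    (V : Matrix (Fin n) (Fin n) ℝ)
    (hV : ∀ i j, V i j = K (s i) (s j))
    (lam : Fin n → ℝ)
    (hlam_anti : Antitone lam)
    (u : Fin n → Fin n → ℝ)
    (hu_orth : ∀ i j, (∑ a, u i a * u j a) = if i = j then 1 else 0)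
    (hu_eig : ∀ i, V.mulVec (u i) = lam i • u i)
    (W : Submodule ℝ H) [FiniteDimensional ℝ W] (hW : Module.finrank ℝ W ≤ k) :
    (⨅ i : Fin n, c (Metric.diam (Di i))) * ((n : ℝ) * γ)⁻¹ * (volume D).toReal *
        (∑ i ∈ Finset.univ.filter (fun i : Fin n => k ≤ (i : ℕ)), lam i) ≤
      2 * (∫ x in D, ‖y x - (W.orthogonalProjection (y x) : H)‖ ^ 2) +
        2 * (1 - ⨅ i : Fin n, c (Metric.diam (Di i))) * ∫ x in D, K x x := by
  classical
  haveI : Nonempty (Fin n) := ⟨⟨0, by omega⟩⟩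
  set cmin := ⨅ i : Fin n, c (Metric.diam (Di i)) with hcmin
  have hDiD : ∀ i, Di i ⊆ D := fun i => by rw [hDi i]; exact fun x hx => hx.1
  have hsDi : ∀ i, s i ∈ Di i := fun i => by
    rw [hDi i]
    exact ⟨hs_mem i, fun j => by simp [dist_nonneg]⟩
  -- facts about c
  have hbdd : ∀ δ : ℝ, BddBelow
      {r : ℝ | ∃ x₁ ∈ D, ∃ x₂ ∈ D, dist x₁ x₂ ≤ δ ∧ r = (K x₁ x₂ / K x₂ x₂) ^ 2} := by
    intro δ
    refine ⟨0, fun r hr => ?_⟩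
    obtain ⟨x₁, -, x₂, -, -, rfl⟩ := hr
    positivity
  have hone : ∀ i : Fin n, (1:ℝ) ∈
      {r : ℝ | ∃ x₁ ∈ D, ∃ x₂ ∈ D, dist x₁ x₂ ≤ Metric.diam (Di i)
        ∧ r = (K x₁ x₂ / K x₂ x₂) ^ 2} := by
    intro i
    refine ⟨s i, hs_mem i, s i, hs_mem i, by simp [Metric.diam_nonneg], ?_⟩
    rw [div_self (hKpos _ (hs_mem i)).ne']
    norm_num
  have hcle : ∀ (i : Fin n), ∀ x₁ ∈ D, ∀ x₂ ∈ D, dist x₁ x₂ ≤ Metric.diam (Di i) →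
      c (Metric.diam (Di i)) ≤ (K x₁ x₂ / K x₂ x₂) ^ 2 := by
    intro i x₁ h1 x₂ h2 hd
    rw [hc]
    exact csInf_le (hbdd _) ⟨x₁, h1, x₂, h2, hd, rfl⟩
  have hc0 : ∀ i : Fin n, 0 ≤ c (Metric.diam (Di i)) := by
    intro i
    rw [hc]
    refine le_csInf ⟨1, hone i⟩ ?_
    rintro r ⟨x₁, -, x₂, -, -, rfl⟩
    positivity
  have hcmin_le : ∀ i, cmin ≤ c (Metric.diam (Di i)) := fun i =>
    ciInf_le (Set.Finite.bddBelow (Set.finite_range _)) i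
  have hcmin0 : 0 ≤ cmin := le_ciInf hc0
  have hcmin1 : cmin ≤ 1 := by
    refine (hcmin_le ⟨0, by omega⟩).trans ?_
    rw [hc]
    exact csInf_le (hbdd _) (hone _)
  -- disjointified Voronoi cells
  set A : Fin n → Set (EuclideanSpace ℝ (Fin d)) :=
    fun a => {x | ∀ j, dist x (s a) ≤ dist x (s j)} with hA
  set D' : Fin n → Set (EuclideanSpace ℝ (Fin d)) :=
    fun a => (D ∩ A a) ∩ ⋂ (b : Fin n) (_ : b < a), (A b)ᶜ with hD'
  have hAclosed : ∀ a, IsClosed (A a) := by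
    intro a
    have h1 : A a = ⋂ j, {x | dist x (s a) ≤ dist x (s j)} := by ext x; simp [hA]
    rw [h1]
    exact isClosed_iInter fun j =>
      isClosed_le (continuous_id.dist continuous_const) (continuous_id.dist continuous_const)
  have hDmeas : MeasurableSet D := hD.isClosed.measurableSet
  have hD'meas : ∀ a, MeasurableSet (D' a) := fun a =>
    (hDmeas.inter (hAclosed a).measurableSet).inter
      (MeasurableSet.iInter fun b => MeasurableSet.iInter fun _ =>
        (hAclosed b).measurableSet.compl)
  have hD'sub : ∀ a, D' a ⊆ Di a := by
    intro a x hx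
    rw [hDi a]
    exact ⟨hx.1.1, hx.1.2⟩
  have hD'D : ∀ a, D' a ⊆ D := fun a => (hD'sub a).trans (hDiD a)
  have hcover : ⋃ a, D' a = D := by
    apply Set.Subset.antisymm (Set.iUnion_subset fun a => hD'D a)
    intro x hx
    have hTne : (univ.filter (fun a : Fin n => x ∈ A a)).Nonempty := by
      obtain ⟨a, -, ha⟩ := Finset.exists_min_image univ (fun j => dist x (s j))
        ⟨⟨0, by omega⟩, Finset.mem_univ _⟩
      exact ⟨a, Finset.mem_filter.mpr ⟨Finset.mem_univ _, fun j => ha j (Finset.mem_univ j)⟩⟩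
    set a := (univ.filter (fun a : Fin n => x ∈ A a)).min' hTne with ha
    have haA : x ∈ A a := (Finset.mem_filter.mp (Finset.min'_mem _ hTne)).2
    refine Set.mem_iUnion.mpr ⟨a, ⟨⟨hx, haA⟩, ?_⟩⟩
    simp only [Set.mem_iInter, Set.mem_compl_iff]
    intro b hb hbA
    exact absurd (Finset.min'_le _ b (Finset.mem_filter.mpr ⟨Finset.mem_univ _, hbA⟩))
      (not_le.mpr hb)
  have hdisj : ∀ a b : Fin n, a ≠ b → Disjoint (D' a) (D' b) := by
    have key : ∀ a b : Fin n, a < b → Disjoint (D' a) (D' b) := by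
      intro a b hab
      rw [Set.disjoint_left]
      intro x hxa hxb
      have h1 : x ∈ A a := hxa.1.2
      have h2 := hxb.2
      simp only [Set.mem_iInter, Set.mem_compl_iff] at h2
      exact h2 a hab h1
    intro a b hab
    rcases lt_or_gt_of_ne hab with h | h
    · exact key a b h
    · exact (key b a h).symm
  have hnull : ∀ a, volume (Di a \ D' a) = 0 := by
    intro a
    have hsubset : Di a \ D' a ⊆
        ⋃ (b : Fin n) (_ : b ≠ a), {x | dist x (s a) = dist x (s b)} := by
      intro x hx
      obtain ⟨hxDi, hxn⟩ := hx
      rw [hDi a] at hxDi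
      obtain ⟨hxD, hxA⟩ := hxDi
      have h1 : ¬ (x ∈ ⋂ (b : Fin n) (_ : b < a), (A b)ᶜ) := fun hmem =>
        hxn ⟨⟨hxD, hxA⟩, hmem⟩
      simp only [Set.mem_iInter, Set.mem_compl_iff, not_forall, not_not] at h1
      obtain ⟨b, hb, hxAb⟩ := h1
      refine Set.mem_iUnion.mpr ⟨b, Set.mem_iUnion.mpr ⟨(ne_of_gt hb).symm, ?_⟩⟩
      exact le_antisymm (hxA b) (hxAb a)
    refine measure_mono_null hsubset (measure_iUnion_null fun b => ?_)
    rcases eq_or_ne b a with rfl | hba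
    · simp
    · refine measure_mono_null (Set.iUnion_subset fun _ => subset_rfl) ?_
      exact bisector_null _ _ fun h => hba (hs_inj h.symm)
  have hvol_eq : ∀ a, volume (D' a) = volume (Di a) := by
    intro a
    refine le_antisymm (measure_mono (hD'sub a)) ?_
    calc volume (Di a) ≤ volume (D' a ∪ (Di a \ D' a)) := by
          refine measure_mono fun x hx => ?_
          by_cases h : x ∈ D' a
          · exact Or.inl h
          · exact Or.inr ⟨hx, h⟩
      _ ≤ volume (D' a) + volume (Di a \ D' a) := measure_union_le _ _
      _ = volume (D' a) := by rw [hnull a, add_zero]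
  -- volume lower bound
  have hn0 : (0:ℝ) < (n:ℝ) := by exact_mod_cast (by omega : 0 < n)
  have hnγ : (0:ℝ) < (n:ℝ) * γ := by nlinarith
  have hD'fin : ∀ a, volume (D' a) ≠ ⊤ := fun a =>
    ((measure_mono (hD'D a)).trans_lt hD.measure_lt_top).ne
  have hm : ∀ a, ((n : ℝ) * γ)⁻¹ * (volume D).toReal ≤ (volume (D' a)).toReal := by
    intro a
    have h2 : volume D ≤ ∑ b : Fin n, volume (D' b) := by
      calc volume D = volume (⋃ a, D' a) := by rw [hcover]
        _ ≤ ∑' b : Fin n, volume (D' b) := measure_iUnion_le _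
        _ = ∑ b : Fin n, volume (D' b) := tsum_fintype _
    have h1 : (volume D).toReal ≤ ∑ b : Fin n, (volume (D' b)).toReal := by
      have h3 := ENNReal.toReal_mono (by
        exact (ENNReal.sum_lt_top.mpr fun b _ => (hD'fin b).lt_top).ne) h2
      rwa [ENNReal.toReal_sum (fun b _ => hD'fin b)] at h3
    have h4 : ∀ b : Fin n, (volume (D' b)).toReal ≤ γ * (volume (D' a)).toReal := by
      intro b
      rw [hvol_eq, hvol_eq]
      exact hbal b a
    have h5 : (volume D).toReal ≤ (n : ℝ) * (γ * (volume (D' a)).toReal) :=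
      h1.trans ((Finset.sum_le_sum fun b _ => h4 b).trans_eq (by
        rw [Finset.sum_const, Finset.card_univ, Fintype.card_fin, nsmul_eq_mul]))
    rw [inv_mul_le_iff₀ hnγ]
    linarith
  -- integrability
  have hf1cont : ContinuousOn
      (fun x => ‖y x - (W.orthogonalProjection (y x) : H)‖ ^ 2) D := by
    have hPc : Continuous fun v : H => (W.orthogonalProjection v : H) :=
      (W.subtypeL.comp (W.orthogonalProjection)).continuous
    exact ((hy.sub (hPc.comp_continuousOn hy)).norm.pow 2)
  have hf2cont : ContinuousOn (fun x => K x x) D := by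
    have h1 : (fun x => K x x) = fun x => ⟪y x, y x⟫_ℝ := funext fun x => hK x x
    rw [h1]
    exact ContinuousOn.inner hy hy
  have hf1int : IntegrableOn (fun x => ‖y x - (W.orthogonalProjection (y x) : H)‖ ^ 2) D :=
    hf1cont.integrableOn_compact hD
  have hf2int : IntegrableOn (fun x => K x x) D := hf2cont.integrableOn_compact hD
  set g : EuclideanSpace ℝ (Fin d) → ℝ :=
    fun x => 2 * ‖y x - (W.orthogonalProjection (y x) : H)‖ ^ 2 + 2 * (1 - cmin) * K x x
    with hg
  have hgint : IntegrableOn g D := (hf1int.const_mul 2).add (hf2int.const_mul (2 * (1 - cmin)))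
  have hgsplit : ∫ x in D, g x =
      2 * (∫ x in D, ‖y x - (W.orthogonalProjection (y x) : H)‖ ^ 2)
        + 2 * (1 - cmin) * ∫ x in D, K x x := by
    rw [hg]
    rw [integral_add (hf1int.const_mul 2) (hf2int.const_mul (2 * (1 - cmin))),
      integral_const_mul, integral_const_mul]
  -- pointwise bound
  have hpt : ∀ a, ∀ x ∈ Di a,
      cmin * ‖y (s a) - (W.orthogonalProjection (y (s a)) : H)‖ ^ 2 ≤ g x := by
    intro a x hx
    have hxD : x ∈ D := hDiD a hx
    have hdist : dist x (s a) ≤ Metric.diam (Di a) :=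
      Metric.dist_le_diam_of_mem (hD.isBounded.subset (hDiD a)) hx (hsDi a)
    have hq : 0 < ⟪y (s a), y (s a)⟫_ℝ := by rw [← hK]; exact hKpos _ (hs_mem a)
    have hp : 0 < ⟪y x, y x⟫_ℝ := by rw [← hK]; exact hKpos _ hxD
    have c1 : cmin ≤ (⟪y x, y (s a)⟫_ℝ / ⟪y (s a), y (s a)⟫_ℝ) ^ 2 := by
      have h1 := (hcmin_le a).trans (hcle a x hxD (s a) (hs_mem a) hdist)
      simpa only [hK] using h1
    have c2 : cmin ≤ (⟪y x, y (s a)⟫_ℝ / ⟪y x, y x⟫_ℝ) ^ 2 := by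
      have hdist' : dist (s a) x ≤ Metric.diam (Di a) := by rwa [dist_comm]
      have h1 := (hcmin_le a).trans (hcle a (s a) (hs_mem a) x hxD hdist')
      simp only [hK] at h1
      rwa [real_inner_comm (y x) (y (s a))] at h1
    have h2 := pointwise_ineq W (y (s a)) (y x) cmin hcmin0 hp hq c1 c2
    calc cmin * ‖y (s a) - (W.orthogonalProjection (y (s a)) : H)‖ ^ 2
        ≤ 2 * ‖y x - (W.orthogonalProjection (y x) : H)‖ ^ 2
          + 2 * (1 - cmin) * ⟪y x, y x⟫_ℝ := h2
      _ = g x := by simp only [hg]; rw [hK]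
  -- per-cell integral bound
  have hcell : ∀ a, cmin * (((n:ℝ) * γ)⁻¹ * (volume D).toReal) *
      ‖y (s a) - (W.orthogonalProjection (y (s a)) : H)‖ ^ 2 ≤ ∫ x in D' a, g x := by
    intro a
    set Ca := ‖y (s a) - (W.orthogonalProjection (y (s a)) : H)‖ ^ 2 with hCa
    have hCa0 : 0 ≤ Ca := sq_nonneg _
    have hstep1 : cmin * (((n:ℝ) * γ)⁻¹ * (volume D).toReal) * Ca
        ≤ cmin * (volume (D' a)).toReal * Ca :=
      mul_le_mul_of_nonneg_right (mul_le_mul_of_nonneg_left (hm a) hcmin0) hCa0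
    have hconst : ∫ _ in D' a, (cmin * Ca) ∂volume = (volume (D' a)).toReal * (cmin * Ca) := by
      rw [setIntegral_const, smul_eq_mul, measureReal_def]
    have hmono : ∫ _ in D' a, (cmin * Ca) ∂volume ≤ ∫ x in D' a, g x := by
      refine setIntegral_mono_on (integrableOn_const (hD'fin a))
        (hgint.mono_set (hD'D a)) (hD'meas a) ?_
      intro x hx
      exact hpt a x (hD'sub a hx)
    calc cmin * (((n:ℝ) * γ)⁻¹ * (volume D).toReal) * Ca
        ≤ cmin * (volume (D' a)).toReal * Ca := hstep1
      _ = (volume (D' a)).toReal * (cmin * Ca) := by ring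
      _ = ∫ _ in D' a, (cmin * Ca) ∂volume := hconst.symm
      _ ≤ ∫ x in D' a, g x := hmono
  -- sum over cells
  have hsum_int : ∑ a, ∫ x in D' a, g x = ∫ x in D, g x := by
    have h1 := integral_biUnion_finset (μ := volume) (f := g) univ
      (fun a _ => hD'meas a)
      (fun a _ b _ hab => hdisj a b hab)
      (fun a _ => hgint.mono_set (hD'D a))
    have h2 : ⋃ a ∈ (univ : Finset (Fin n)), D' a = D := by
      rw [← hcover]
      simp
    rw [h2] at h1
    exact h1.symm
  -- eigenvalue tail bound
  have htail := tail_sum_le_proj_error hkn (fun a => y (s a)) V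
    (fun i j => by rw [hV]; exact hK _ _) lam hlam_anti u hu_orth hu_eig W hW
  -- final chain
  set m := ((n:ℝ) * γ)⁻¹ * (volume D).toReal with hmdef
  have hm0 : 0 ≤ m := by positivity
  have hfin1 : cmin * m * (∑ i ∈ univ.filter (fun i : Fin n => k ≤ (i : ℕ)), lam i)
      ≤ cmin * m * ∑ a, ‖y (s a) - (W.orthogonalProjection (y (s a)) : H)‖ ^ 2 :=
    mul_le_mul_of_nonneg_left htail (by positivity)
  have hfin2 : cmin * m * ∑ a, ‖y (s a) - (W.orthogonalProjection (y (s a)) : H)‖ ^ 2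
      ≤ ∫ x in D, g x := by
    rw [← hsum_int, Finset.mul_sum]
    exact Finset.sum_le_sum fun a _ => by
      have := hcell a
      calc cmin * m * ‖y (s a) - (W.orthogonalProjection (y (s a)) : H)‖ ^ 2
          = cmin * (((n:ℝ) * γ)⁻¹ * (volume D).toReal) *
            ‖y (s a) - (W.orthogonalProjection (y (s a)) : H)‖ ^ 2 := by rw [hmdef]
        _ ≤ ∫ x in D' a, g x := hcell a
  have hgoal : cmin * ((n : ℝ) * γ)⁻¹ * (volume D).toReal *
      (∑ i ∈ univ.filter (fun i : Fin n => k ≤ (i : ℕ)), lam i)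
      = cmin * m * (∑ i ∈ univ.filter (fun i : Fin n => k ≤ (i : ℕ)), lam i) := by
    rw [hmdef]; ring
  rw [hgoal]
  calc cmin * m * (∑ i ∈ univ.filter (fun i : Fin n => k ≤ (i : ℕ)), lam i)
      ≤ ∫ x in D, g x := hfin1.trans hfin2
    _ = _ := hgsplit
end

section
/- Let D ⊂ ℝ^d be compact, H a real Hilbert space, y : D → H continuous, K(s,x) = ⟨y(s),y(x)⟩ with K(x,x) > 0 on D. Let s₁,…,sₙ be distinct points of D with Voronoi cells Dᵢ (which cover D) and δᵢ = Δ(Dᵢ), and let y*(s) denote the orthogonal projection of y(s) onto span{y(s₁),…,y(sₙ)} (the predictive process). Then ∫_D ‖y(s) − y*(s)‖² ds ≤ |D|·(1 − minᵢ c(δᵢ))·max_{s∈D} K(s,s). -/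
open scoped InnerProductSpace
open MeasureTheory

/-- Bound on the integrated squared error of the predictive process (from the proof of the
paper's Theorem 1): with Voronoi cells `Dᵢ` of the distinct points `s₁,…,sₙ ∈ D` and
`y*(s)` the orthogonal projection of `y(s)` onto `span{y(s₁),…,y(sₙ)}`,
`∫_D ‖y(s) − y*(s)‖² ds ≤ |D|·(1 − minᵢ c(δᵢ))·max_{s∈D} K(s,s)`. -/
theorem predictive_process_error_bound
    {d : ℕ} {H : Type*} [NormedAddCommGroup H] [InnerProductSpace ℝ H]
    (D : Set (EuclideanSpace ℝ (Fin d))) (hD : IsCompact D)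
    (y : EuclideanSpace ℝ (Fin d) → H) (hy : ContinuousOn y D)
    (K : EuclideanSpace ℝ (Fin d) → EuclideanSpace ℝ (Fin d) → ℝ)
    (hK : ∀ s x, K s x = ⟪y s, y x⟫_ℝ)
    (hKpos : ∀ x ∈ D, 0 < K x x)
    (c : ℝ → ℝ)
    (hc : ∀ δ, c δ =
      sInf {r : ℝ | ∃ x₁ ∈ D, ∃ x₂ ∈ D, dist x₁ x₂ ≤ δ ∧ r = (K x₁ x₂ / K x₂ x₂) ^ 2})
    {n : ℕ} (hn : 0 < n)
    (s : Fin n → EuclideanSpace ℝ (Fin d)) (hs_mem : ∀ i, s i ∈ D)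
    (hs_inj : Function.Injective s)
    (Di : Fin n → Set (EuclideanSpace ℝ (Fin d)))
    (hDi : ∀ i, Di i = {x ∈ D | ∀ j, dist x (s i) ≤ dist x (s j)})
    (Hn : Submodule ℝ H)
    (hHn : Hn = Submodule.span ℝ (Set.range fun i => y (s i)))
    [FiniteDimensional ℝ Hn] :
    (∫ x in D, ‖y x - (Submodule.orthogonalProjectionOnto Hn (y x) : H)‖ ^ 2) ≤
      (volume D).toReal * (1 - ⨅ i : Fin n, c (Metric.diam (Di i))) *
        sSup ((fun x => K x x) '' D) := by
  have i0 : Fin n := ⟨0, hn⟩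
  have hD0 : D.Nonempty := ⟨s i0, hs_mem i0⟩
  set M : ℝ := sSup ((fun x => K x x) '' D) with hM
  set cmin : ℝ := ⨅ i : Fin n, c (Metric.diam (Di i)) with hcmin
  -- continuity of x ↦ K x x on D
  have hKcont : ContinuousOn (fun x => K x x) D := by
    have : ContinuousOn (fun x => ⟪y x, y x⟫_ℝ) D := hy.inner hy
    simpa only [hK] using this
  have hMbdd : BddAbove ((fun x => K x x) '' D) := (hD.image_of_continuousOn hKcont).bddAbove
  have hKM : ∀ x ∈ D, K x x ≤ M := fun x hx => le_csSup hMbdd ⟨x, hx, rfl⟩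
  have hMpos : 0 < M := lt_of_lt_of_le (hKpos _ (hs_mem i0)) (hKM _ (hs_mem i0))
  -- c is nonnegative
  have hc_nonneg : ∀ δ, 0 ≤ c δ := by
    intro δ
    rw [hc]
    apply Real.sInf_nonneg
    rintro r ⟨x₁, _, x₂, _, _, rfl⟩
    positivity
  -- c δ ≤ 1 for δ ≥ 0
  have hc_le_one : ∀ δ, 0 ≤ δ → c δ ≤ 1 := by
    intro δ hδ
    rw [hc]
    have h1 : (1 : ℝ) ∈ {r : ℝ | ∃ x₁ ∈ D, ∃ x₂ ∈ D, dist x₁ x₂ ≤ δ ∧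
        r = (K x₁ x₂ / K x₂ x₂) ^ 2} := by
      refine ⟨s i0, hs_mem i0, s i0, hs_mem i0, by simpa using hδ, ?_⟩
      rw [div_self (hKpos _ (hs_mem i0)).ne', one_pow]
    exact csInf_le ⟨0, by rintro r ⟨x₁, _, x₂, _, _, rfl⟩; positivity⟩ h1
  have hcmin_le_one : cmin ≤ 1 := by
    refine ciInf_le_of_le ⟨0, by rintro r ⟨i, rfl⟩; exact hc_nonneg _⟩ i0 ?_
    exact hc_le_one _ Metric.diam_nonneg
  have hcmin_le : ∀ i, cmin ≤ c (Metric.diam (Di i)) := fun i =>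
    ciInf_le ⟨0, by rintro r ⟨i, rfl⟩; exact hc_nonneg _⟩ i
  -- the pointwise bound
  have hpt : ∀ x ∈ D, ‖y x - (Submodule.orthogonalProjectionOnto Hn (y x) : H)‖ ^ 2 ≤ (1 - cmin) * M := by
    intro x hx
    -- pick the nearest center
    obtain ⟨i, -, hi⟩ := Finset.exists_min_image Finset.univ (fun j => dist x (s j))
      ⟨i0, Finset.mem_univ i0⟩
    have hxDi : x ∈ Di i := by
      rw [hDi]; exact ⟨hx, fun j => hi j (Finset.mem_univ j)⟩
    have hsDi : s i ∈ Di i := by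
      rw [hDi]; exact ⟨hs_mem i, fun j => by simp [dist_nonneg]⟩
    have hDisub : Di i ⊆ D := by rw [hDi]; exact fun z hz => hz.1
    have hbdd : Bornology.IsBounded (Di i) := hD.isBounded.subset hDisub
    have hdist : dist x (s i) ≤ Metric.diam (Di i) :=
      Metric.dist_le_diam_of_mem hbdd hxDi hsDi
    set a : ℝ := K x (s i) with ha
    set p : ℝ := K x x with hp
    set q : ℝ := K (s i) (s i) with hq
    have hp0 : 0 < p := hKpos x hx
    have hq0 : 0 < q := hKpos _ (hs_mem i)
    have hsym : K (s i) x = a := by rw [hK, ha, hK, real_inner_comm]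
    set δ : ℝ := Metric.diam (Di i) with hδ
    -- c δ ≤ a²/p² and c δ ≤ a²/q²
    have hbl : BddBelow {r : ℝ | ∃ x₁ ∈ D, ∃ x₂ ∈ D, dist x₁ x₂ ≤ δ ∧
        r = (K x₁ x₂ / K x₂ x₂) ^ 2} :=
      ⟨0, by rintro r ⟨x₁, _, x₂, _, _, rfl⟩; positivity⟩
    have hc1 : c δ ≤ (a / p) ^ 2 := by
      rw [hc]
      refine csInf_le hbl ⟨s i, hs_mem i, x, hx, ?_, by rw [hsym]⟩
      rwa [dist_comm]
    have hc2 : c δ ≤ (a / q) ^ 2 := by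
      rw [hc]
      exact csInf_le hbl ⟨x, hx, s i, hs_mem i, hdist, rfl⟩
    -- hence c δ ≤ a² / (p q)
    have hcδ : c δ ≤ a ^ 2 / (p * q) := by
      rcases le_total p q with hpq | hpq
      · refine hc2.trans ?_
        rw [div_pow]
        exact div_le_div_of_nonneg_left (by positivity) (by positivity) (by nlinarith)
      · refine hc1.trans ?_
        rw [div_pow]
        exact div_le_div_of_nonneg_left (by positivity) (by positivity) (by nlinarith)
    -- the comparison vector in Hn
    set v : H := (a / q) • y (s i) with hv
    have hvmem : v ∈ Hn := by
      rw [hHn]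
      exact Submodule.smul_mem _ _ (Submodule.subset_span ⟨i, rfl⟩)
    have hproj : ‖y x - (Submodule.orthogonalProjectionOnto Hn (y x) : H)‖ ≤ ‖y x - v‖ := by
      rw [← Submodule.starProjection_apply, Submodule.starProjection_minimal]
      exact ciInf_le ⟨0, by rintro r ⟨w, rfl⟩; positivity⟩ (⟨v, hvmem⟩ : Hn)
    have hnormv : ‖y x - v‖ ^ 2 = p - a ^ 2 / q := by
      have h1 : ‖y x - v‖ ^ 2 = ⟪y x - v, y x - v⟫_ℝ := (real_inner_self_eq_norm_sq _).symm
      rw [h1]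
      simp only [hv, inner_sub_sub_self, real_inner_smul_left, real_inner_smul_right]
      have e1 : ⟪y x, y x⟫_ℝ = p := (hK x x).symm
      have e2 : ⟪y x, y (s i)⟫_ℝ = a := (hK x (s i)).symm
      have e3 : ⟪y (s i), y x⟫_ℝ = a := by rw [← hK]; exact hsym
      have e4 : ⟪y (s i), y (s i)⟫_ℝ = q := (hK (s i) (s i)).symm
      rw [e1, e2, e3, e4]
      field_simp
      ring
    have hfinal : p - a ^ 2 / q ≤ (1 - cmin) * M := by
      have h5 : cmin * (p * q) ≤ a ^ 2 := by
        have := (hcmin_le i).trans hcδ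
        calc cmin * (p * q) ≤ a ^ 2 / (p * q) * (p * q) := by
              apply mul_le_mul_of_nonneg_right this (by positivity)
          _ = a ^ 2 := by field_simp
      have h6 : cmin * p ≤ a ^ 2 / q := by
        rw [le_div_iff₀ hq0]
        nlinarith
      have h7 : (1 - cmin) * p ≤ (1 - cmin) * M :=
        mul_le_mul_of_nonneg_left (hKM x hx) (by linarith)
      nlinarith
    calc ‖y x - (Submodule.orthogonalProjectionOnto Hn (y x) : H)‖ ^ 2
        ≤ ‖y x - v‖ ^ 2 := by
          apply pow_le_pow_left₀ (norm_nonneg _) hproj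
      _ = p - a ^ 2 / q := hnormv
      _ ≤ (1 - cmin) * M := hfinal
  -- continuity of the integrand on D
  have hprojcont : Continuous fun u : H => u - (Submodule.orthogonalProjectionOnto Hn u : H) :=
    continuous_id.sub (continuous_subtype_val.comp (Submodule.orthogonalProjectionOnto Hn).continuous)
  have hfcont : ContinuousOn (fun x => ‖y x - (Submodule.orthogonalProjectionOnto Hn (y x) : H)‖ ^ 2) D :=
    ((hprojcont.comp_continuousOn hy).norm.pow 2)
  have hmeas : MeasurableSet D := hD.measurableSet
  have hint : IntegrableOn (fun x => ‖y x - (Submodule.orthogonalProjectionOnto Hn (y x) : H)‖ ^ 2) D :=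
    hfcont.integrableOn_compact hD
  have hintc : IntegrableOn (fun _ : EuclideanSpace ℝ (Fin d) => (1 - cmin) * M) D :=
    integrableOn_const hD.measure_lt_top.ne
  calc (∫ x in D, ‖y x - (Submodule.orthogonalProjectionOnto Hn (y x) : H)‖ ^ 2)
      ≤ ∫ _ in D, (1 - cmin) * M := setIntegral_mono_on hint hintc hmeas hpt
    _ = (volume D).toReal * ((1 - cmin) * M) := by rw [setIntegral_const, smul_eq_mul, Measure.real]
    _ = (volume D).toReal * (1 - cmin) * M := by ring
end

section
/- Let V ∈ ℝ^{n×n} be symmetric positive semidefinite with eigenvalues λ₁ ≥ … ≥ λₙ ≥ 0 and orthonormal eigenvectors u₁,…,uₙ. For 1 ≤ k < n set V_k = Σ_{i=1}^k λᵢ uᵢuᵢᵀ, let τ > 0, and M = V(V_k + τI)⁻¹. Then trace((I − M)V(I − M)ᵀ) = Σ_{i=1}^k λᵢ/(1 + λᵢ/τ)² + Σ_{i=k+1}^n λᵢ(1 − λᵢ/τ)². -/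
open Matrix

/-- Trace form of the paper's equation (17): for symmetric PSD `V` with eigenvalues
`λ₁ ≥ … ≥ λₙ ≥ 0` and orthonormal eigenvectors `u₁,…,uₙ`, `V_k = ∑_{i≤k} λᵢuᵢuᵢᵀ`, `τ > 0`,
and `M = V(V_k + τI)⁻¹`:
`trace((I − M)V(I − M)ᵀ) = ∑_{i≤k} λᵢ/(1+λᵢ/τ)² + ∑_{i>k} λᵢ(1−λᵢ/τ)²`. -/
theorem perturbation_mse_trace
    {n : ℕ} (V : Matrix (Fin n) (Fin n) ℝ)
    (hVsym : V.IsSymm)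
    (lam : Fin n → ℝ)
    (hlam_anti : Antitone lam)
    (hlam_nonneg : ∀ i, 0 ≤ lam i)
    (u : Fin n → Fin n → ℝ)
    (hu_orth : ∀ i j, (∑ a, u i a * u j a) = if i = j then 1 else 0)
    (hu_eig : ∀ i, V.mulVec (u i) = lam i • u i)
    {k : ℕ} (hk : 1 ≤ k) (hkn : k < n)
    (Vk : Matrix (Fin n) (Fin n) ℝ)
    (hVk : Vk = ∑ i ∈ Finset.univ.filter (fun i : Fin n => (i : ℕ) < k),
      lam i • Matrix.vecMulVec (u i) (u i))
    (τ : ℝ) (hτ : 0 < τ) :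
    ((1 - V * (Vk + τ • 1)⁻¹) * V * (1 - V * (Vk + τ • 1)⁻¹)ᵀ).trace =
      (∑ i ∈ Finset.univ.filter (fun i : Fin n => (i : ℕ) < k),
        lam i / (1 + lam i / τ) ^ 2) +
      ∑ i ∈ Finset.univ.filter (fun i : Fin n => k ≤ (i : ℕ)),
        lam i * (1 - lam i / τ) ^ 2 := by
  classical
  set P : Matrix (Fin n) (Fin n) ℝ := Matrix.of u with hP
  -- P has orthonormal rows
  have hPPT : P * Pᵀ = 1 := by
    ext i j
    simp only [mul_apply, transpose_apply, hP, Matrix.of_apply, Matrix.one_apply]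
    exact hu_orth i j
  have hPTP : Pᵀ * P = 1 := mul_eq_one_comm.mp hPPT
  set d : Fin n → ℝ := fun i => if (i : ℕ) < k then lam i else 0 with hd
  -- V = Pᵀ D P
  have hVP : V * Pᵀ = Pᵀ * diagonal lam := by
    ext j i
    rw [Matrix.mul_diagonal]
    have h := congrFun (hu_eig i) j
    simp only [mulVec, dotProduct, Pi.smul_apply, smul_eq_mul] at h
    simp only [mul_apply, transpose_apply, hP, Matrix.of_apply]
    rw [h]; ring
  have hV : V = Pᵀ * diagonal lam * P := by
    calc V = V * (Pᵀ * P) := by rw [hPTP, mul_one]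
    _ = (V * Pᵀ) * P := by rw [mul_assoc]
    _ = Pᵀ * diagonal lam * P := by rw [hVP]
  -- Vk = Pᵀ Dk P
  have hVkD : Vk = Pᵀ * diagonal d * P := by
    rw [hVk]
    ext a b
    rw [Matrix.sum_apply, Matrix.mul_apply]
    simp only [Matrix.mul_diagonal, transpose_apply, hP, Matrix.of_apply]
    rw [Finset.sum_filter]
    refine Finset.sum_congr rfl fun i _ => ?_
    simp only [hd]
    by_cases hik : (i : ℕ) < k
    · simp only [if_pos hik, Matrix.smul_apply, vecMulVec_apply, smul_eq_mul]; ring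
    · simp [hik]
  -- the regularized matrix and its inverse
  have hdn : ∀ i, d i + τ ≠ 0 := by
    intro i
    have : 0 ≤ d i := by by_cases hik : (i : ℕ) < k <;> simp [hd, hik, hlam_nonneg i]
    positivity
  have hreg : Vk + τ • 1 = Pᵀ * diagonal (fun i => d i + τ) * P := by
    have h1 : (τ • (1 : Matrix (Fin n) (Fin n) ℝ)) = Pᵀ * diagonal (fun _ => τ) * P := by
      have : (diagonal (fun _ : Fin n => τ)) = τ • (1 : Matrix (Fin n) (Fin n) ℝ) := by
        ext i j
        by_cases h : i = j <;>
          simp [Matrix.diagonal_apply, Matrix.one_apply, Matrix.smul_apply, h]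
      rw [this]
      rw [Matrix.mul_smul, mul_one, Matrix.smul_mul, hPTP]
    rw [hVkD, h1, ← Matrix.add_mul, ← Matrix.mul_add, ← Matrix.diagonal_add]
  have hinv : (Vk + τ • 1)⁻¹ = Pᵀ * diagonal (fun i => (d i + τ)⁻¹) * P := by
    apply Matrix.inv_eq_right_inv
    rw [hreg]
    calc Pᵀ * diagonal (fun i => d i + τ) * P * (Pᵀ * diagonal (fun i => (d i + τ)⁻¹) * P)
        = Pᵀ * diagonal (fun i => d i + τ) * (P * Pᵀ) * diagonal (fun i => (d i + τ)⁻¹) * P := by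
          noncomm_ring
      _ = Pᵀ * (diagonal (fun i => d i + τ) * diagonal (fun i => (d i + τ)⁻¹)) * P := by
          rw [hPPT, mul_one]; noncomm_ring
      _ = 1 := by
          rw [Matrix.diagonal_mul_diagonal]
          have : (fun i => (d i + τ) * (d i + τ)⁻¹) = fun _ => (1:ℝ) := by
            funext i; exact mul_inv_cancel₀ (hdn i)
          rw [this, Matrix.diagonal_one, mul_one, hPTP]
  set c : Fin n → ℝ := fun i => 1 - lam i * (d i + τ)⁻¹ with hc
  have hIM : 1 - V * (Vk + τ • 1)⁻¹ = Pᵀ * diagonal c * P := by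
    rw [hinv, hV]
    have h1 : (1 : Matrix (Fin n) (Fin n) ℝ) = Pᵀ * diagonal (fun _ => (1:ℝ)) * P := by
      rw [Matrix.diagonal_one, mul_one, hPTP]
    calc (1 : Matrix (Fin n) (Fin n) ℝ) - Pᵀ * diagonal lam * P * (Pᵀ * diagonal (fun i => (d i + τ)⁻¹) * P)
        = 1 - Pᵀ * diagonal lam * (P * Pᵀ) * diagonal (fun i => (d i + τ)⁻¹) * P := by noncomm_ring
      _ = 1 - Pᵀ * (diagonal lam * diagonal (fun i => (d i + τ)⁻¹)) * P := by
          rw [hPPT, mul_one]; noncomm_ring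
      _ = Pᵀ * (diagonal (fun _ => (1:ℝ)) - diagonal lam * diagonal (fun i => (d i + τ)⁻¹)) * P := by
          rw [Matrix.mul_sub, Matrix.sub_mul, ← h1]
      _ = Pᵀ * diagonal c * P := by
          rw [Matrix.diagonal_mul_diagonal, ← Matrix.diagonal_sub]
  have hprod : (1 - V * (Vk + τ • 1)⁻¹) * V * (1 - V * (Vk + τ • 1)⁻¹)ᵀ
      = Pᵀ * diagonal (fun i => c i * lam i * c i) * P := by
    rw [hIM, hV]
    have hTr : (Pᵀ * diagonal c * P)ᵀ = Pᵀ * diagonal c * P := by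
      rw [Matrix.transpose_mul, Matrix.transpose_mul, Matrix.transpose_transpose,
        Matrix.diagonal_transpose, mul_assoc]
    rw [hTr]
    calc Pᵀ * diagonal c * P * (Pᵀ * diagonal lam * P) * (Pᵀ * diagonal c * P)
        = Pᵀ * diagonal c * (P * Pᵀ) * diagonal lam * (P * Pᵀ) * diagonal c * P := by
          noncomm_ring
      _ = Pᵀ * (diagonal c * diagonal lam * diagonal c) * P := by
          rw [hPPT]; noncomm_ring
      _ = Pᵀ * diagonal (fun i => c i * lam i * c i) * P := by
          rw [Matrix.diagonal_mul_diagonal, Matrix.diagonal_mul_diagonal]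
  rw [hprod]
  have htr : (Pᵀ * diagonal (fun i => c i * lam i * c i) * P).trace
      = ∑ i, c i * lam i * c i := by
    rw [Matrix.trace_mul_cycle, hPPT, one_mul, Matrix.trace_diagonal]
  rw [htr]
  rw [← Finset.sum_filter_add_sum_filter_not Finset.univ (fun i : Fin n => (i : ℕ) < k)
    (fun i => c i * lam i * c i)]
  congr 1
  · refine Finset.sum_congr rfl fun i hi => ?_
    simp only [Finset.mem_filter] at hi
    have hik : (i : ℕ) < k := hi.2
    have hdi : d i = lam i := by simp [hd, hik]
    have hne : lam i + τ ≠ 0 := by have := hlam_nonneg i; positivity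
    have hne2 : 1 + lam i / τ ≠ 0 := by
      have := hlam_nonneg i; positivity
    have e1 : (1 : ℝ) - lam i * (lam i + τ)⁻¹ = τ / (lam i + τ) := by field_simp; ring
    have e2 : (1 : ℝ) + lam i / τ = (lam i + τ) / τ := by field_simp; ring
    simp only [hc, hdi]
    rw [e1, e2, div_pow]
    rw [div_div_eq_mul_div]
    field_simp
  · refine Finset.sum_congr (by simp [not_lt]) fun i hi => ?_
    simp only [Finset.mem_filter, not_lt] at hi
    have hdi : d i = 0 := by simp [hd, Nat.not_lt.mpr hi.2]
    simp only [hc, hdi, zero_add]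
    rw [div_eq_mul_inv]
    ring
end
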